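/- arXiv:1703.07071 — 7 statements merged into one kernel-verified Lean document; each statement's English description precedes it below -/
import Mathlib

section
/- Let D ⊆ ℝⁿ be open and connected and let F : ℝⁿ × [t₀,∞) ⇉ ℝⁿ be a set-valued map admitting local solutions over D × [t₀,∞). If x : I → ℝⁿ is a maximal solution of the differential inclusion ẋ ∈ F(x,t) whose closure of range is contained in D, and for every finite-length subinterval J ⊆ I the set ⋃_{t∈J} F(x(t),t) is bounded, then x is complete, i.e., I = [t₀,∞). -/
open Filter MeasureTheory Set Topology Metric

noncomputable section

section Core

variable {E : Type*} [NormedAddCommGroup E] [InnerProductSpace ℝ E]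

/-- Clarke generalized directional derivative of `U` at `z` in direction `v`:
`U°(z;v) = limsup_{y→z, h↓0} (U(y+hv) − U(y))/h`. -/
def cDD {G : Type*} [NormedAddCommGroup G] [NormedSpace ℝ G] (U : G → ℝ) (z v : G) : ℝ :=
  limsup (fun p : G × ℝ => (U (p.1 + p.2 • v) - U p.1) / p.2) ((𝓝 z) ×ˢ (𝓝[>] (0:ℝ)))

/-- Clarke regularity of `U` at `z`: for every direction the one-sided directional
derivative exists and equals the Clarke generalized directional derivative. -/
def RegularAt {G : Type*} [NormedAddCommGroup G] [NormedSpace ℝ G] (U : G → ℝ) (z : G) : Prop :=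
  ∀ v, Tendsto (fun h : ℝ => (U (z + h • v) - U z) / h) (𝓝[>] (0:ℝ)) (𝓝 (cDD U z v))

/-- Clarke generalized gradient (autonomous / inner-product space version). -/
def cGrad (U : E → ℝ) (z : E) : Set E :=
  {p | ∀ v, (inner ℝ p v : ℝ) ≤ cDD U z v}

/-- Pairing on `E × ℝ` playing the role of the inner product `pᵀ[q;s]`. -/
def pin (p q : E × ℝ) : ℝ := (inner ℝ p.1 q.1 : ℝ) + p.2 * q.2

/-- Clarke generalized gradient of a time-varying function on `E × ℝ`. -/
def cGradP (U : E × ℝ → ℝ) (z : E × ℝ) : Set (E × ℝ) :=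
  {p | ∀ v, pin p v ≤ cDD U z v}

/-- An interval starting at `τ`, either `[τ,∞)` or `[τ,T)`. -/
def IntervalFrom (I : Set ℝ) (τ : ℝ) : Prop :=
  I = Ici τ ∨ ∃ T, τ < T ∧ I = Ico τ T

/-- `x` is a (locally absolutely continuous, Carathéodory) solution of `ẋ ∈ F(x,t)` on `I`,
with a.e. derivative `x'`. -/
def IsSolOn (F : E → ℝ → Set E) (x x' : ℝ → E) (I : Set ℝ) : Prop :=
  ContinuousOn x I ∧
  (∀ᵐ t, t ∈ I → HasDerivAt x (x' t) t ∧ x' t ∈ F (x t) t) ∧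
  ∀ s ∈ I, ∀ t ∈ I, IntervalIntegrable x' volume s t ∧ x t - x s = ∫ τ in s..t, x' τ

/-- Maximal solution starting at time `τ`: a solution with no proper right extension. -/
def IsMaxSol (F : E → ℝ → Set E) (x x' : ℝ → E) (τ : ℝ) (I : Set ℝ) : Prop :=
  IntervalFrom I τ ∧ IsSolOn F x x' I ∧
  ∀ (y y' : ℝ → E) (J : Set ℝ), IntervalFrom J τ → IsSolOn F y y' J →
    I ⊆ J → (∀ t ∈ I, y t = x t) → J = I

/-- `F` admits local solutions over `D × J`. -/
def AdmitsLocalSols (F : E → ℝ → Set E) (D : Set E) (J : Set ℝ) : Prop :=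
  ∀ y ∈ D, ∀ τ ∈ J, ∃ T, τ < T ∧ ∃ x x' : ℝ → E,
    IsSolOn F x x' (Ico τ T) ∧ x τ = y

/-- The reduction `G_U^F(x,t) = {q ∈ F(x,t) : ∃a, ∀p ∈ ∂U(x,t), pᵀ[q;1] = a}`. -/
def GRed (U : E × ℝ → ℝ) (F : E → ℝ → Set E) (x : E) (t : ℝ) : Set E :=
  {q ∈ F x t | ∃ a : ℝ, ∀ p ∈ cGradP U (x, t), pin p (q, 1) = a}

/-- The `𝒰`-reduced differential inclusion `F̃_𝒰 = ⋂ᵢ G_{Uᵢ}^F`. -/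
def FRed (𝒰 : ℕ → E × ℝ → ℝ) (F : E → ℝ → Set E) (x : E) (t : ℝ) : Set E :=
  ⋂ i, GRed (𝒰 i) F x t

open Classical in
/-- The `𝒰`-generalized derivative of `V` in the directions `F` (time-varying),
valued in `EReal` so that it is `⊥ = −∞` when `F̃_𝒰(x,t) = ∅`. -/
def genD (V : E × ℝ → ℝ) (𝒰 : ℕ → E × ℝ → ℝ) (F : E → ℝ → Set E) (x : E) (t : ℝ) : EReal :=
  if ∀ z, RegularAt V z then
    ⨅ p ∈ cGradP V (x, t), ⨆ q ∈ FRed 𝒰 F x t, ((pin p (q, 1) : ℝ) : EReal)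
  else
    ⨆ p ∈ cGradP V (x, t), ⨆ q ∈ FRed 𝒰 F x t, ((pin p (q, 1) : ℝ) : EReal)

/-- Autonomous reduction. -/
def GRedA (U : E → ℝ) (F : E → Set E) (x : E) : Set E :=
  {q ∈ F x | ∃ a : ℝ, ∀ p ∈ cGrad U x, (inner ℝ p q : ℝ) = a}

/-- Autonomous `𝒰`-reduced inclusion. -/
def FRedA (𝒰 : ℕ → E → ℝ) (F : E → Set E) (x : E) : Set E := ⋂ i, GRedA (𝒰 i) F x

open Classical in
/-- Autonomous `𝒰`-generalized derivative. -/
def genDA (V : E → ℝ) (𝒰 : ℕ → E → ℝ) (F : E → Set E) (x : E) : EReal :=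
  if ∀ z, RegularAt V z then
    ⨅ p ∈ cGrad V x, ⨆ q ∈ FRedA 𝒰 F x, ((inner ℝ p q : ℝ) : EReal)
  else
    ⨆ p ∈ cGrad V x, ⨆ q ∈ FRedA 𝒰 F x, ((inner ℝ p q : ℝ) : EReal)

/-- Positive definiteness on a set containing the origin. -/
def PosDefOn (V : E → ℝ) (D : Set E) : Prop :=
  V 0 = 0 ∧ ∀ x ∈ D, x ≠ 0 → 0 < V x

/-- `F : E ⇉ E` (autonomous) viewed as a time-varying map. -/
def auton (F : E → Set E) : E → ℝ → Set E := fun x _ => F x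

/-- Local boundedness of an autonomous set-valued map on `D`. -/
def LocBddA (F : E → Set E) (D : Set E) : Prop :=
  ∀ x ∈ D, ∃ ε > 0, ∃ M, ∀ y ∈ ball x ε, ∀ v ∈ F y, ‖v‖ ≤ M

/-- Local boundedness of a time-varying set-valued map on `D × [t₀,∞)`. -/
def LocBdd (F : E → ℝ → Set E) (D : Set E) (t₀ : ℝ) : Prop :=
  ∀ x ∈ D, ∀ t ∈ Ici t₀, ∃ ε > 0, ∃ M, ∀ y ∈ ball x ε, ∀ s ∈ Ici t₀ ∩ ball t ε,
    ∀ v ∈ F y s, ‖v‖ ≤ M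

/-- Outer semicontinuity of an autonomous set-valued map over `D`. -/
def OuterSC (F : E → Set E) (D : Set E) : Prop :=
  ∀ x ∈ D, ∀ (u v : ℕ → E), Tendsto u atTop (𝓝 x) → (∀ i, v i ∈ F (u i)) →
    ∀ y, Tendsto v atTop (𝓝 y) → y ∈ F x

/-- Weak forward invariance of `A` for the autonomous inclusion `ẋ ∈ F(x)`. -/
def WeakInv (F : E → Set E) (A : Set E) : Prop :=
  ∀ x₀ ∈ A, ∃ x x' I, IsMaxSol (auton F) x x' 0 I ∧ x 0 = x₀ ∧ ∀ t ∈ I, x t ∈ A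

/-- Strong forward invariance of `A` for the autonomous inclusion `ẋ ∈ F(x)`. -/
def StrongInv (F : E → Set E) (A : Set E) : Prop :=
  ∀ x x' I, IsMaxSol (auton F) x x' 0 I → x 0 ∈ A → ∀ t ∈ I, x t ∈ A

end Core

/-- Lemma 1: precompact maximal solutions are complete.
If `D` is open and connected, `F` admits local solutions over `D × [t₀,∞)`,
`x` is a maximal solution whose range-closure is contained in `D`, and the union
`⋃_{t∈J} F(x(t),t)` is bounded for every bounded subinterval `J ⊆ I`,
then `x` is complete, i.e. `I = [t₀,∞)`. -/
theorem stmt0 {E : Type*} [NormedAddCommGroup E] [InnerProductSpace ℝ E]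
    (F : E → ℝ → Set E) (D : Set E) (t₀ : ℝ)
    (hDopen : IsOpen D) (hDconn : IsConnected D)
    (hadm : AdmitsLocalSols F D (Ici t₀))
    (x x' : ℝ → E) (I : Set ℝ)
    (hmax : IsMaxSol F x x' t₀ I)
    (hcl : closure (x '' I) ⊆ D)
    (hbdd : ∀ J ⊆ I, Bornology.IsBounded J → J.OrdConnected →
      Bornology.IsBounded (⋃ t ∈ J, F (x t) t)) :
    I = Ici t₀ := by
  classical
  obtain ⟨hIF, hsol, hmaxprop⟩ := hmax
  rcases hIF with hI | ⟨T, hT, hI⟩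
  · exact hI
  exfalso
  subst hI
  obtain ⟨hcont, hae, hint⟩ := hsol
  have ht₀mem : t₀ ∈ Ico t₀ T := ⟨le_refl _, hT⟩
  have hneT : ∀ᵐ t : ℝ ∂volume, t ≠ T := by
    rw [ae_iff]
    refine measure_mono_null (fun t ht => ?_) (measure_singleton T)
    simpa using not_not.1 ht
  by_cases hC : CompleteSpace E
  · -- complete case
    obtain ⟨M, hM⟩ := (hbdd _ subset_rfl (isBounded_Ico t₀ T) Set.ordConnected_Ico).exists_norm_le
    have hbd : ∀ᵐ t, t ∈ Ico t₀ T → ‖x' t‖ ≤ M := by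
      filter_upwards [hae] with t ht hti
      exact hM _ (mem_biUnion hti (ht hti).2)
    set u : ℕ → ℝ := fun n => T - (T - t₀) / (n + 1) with hu
    have hupos : ∀ n : ℕ, (0:ℝ) < (n:ℝ) + 1 := fun n => by positivity
    have humem : ∀ n, u n ∈ Ico t₀ T := by
      intro n
      constructor
      · have h1 : (T - t₀) / (n + 1) ≤ T - t₀ := by
          apply div_le_self (by linarith)
          simp
        simp only [hu]; linarith
      · have h2 : 0 < (T - t₀) / (n + 1) := div_pos (by linarith) (hupos n)
        simp only [hu]; linarith
    have hUnion : Ioo t₀ T = ⋃ n : ℕ, Ioc t₀ (u n) := by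
      ext s
      simp only [mem_Ioo, mem_iUnion, mem_Ioc]
      constructor
      · rintro ⟨h1, h2⟩
        obtain ⟨n, hn⟩ := exists_nat_gt ((T - t₀) / (T - s))
        refine ⟨n, h1, ?_⟩
        have hTs : 0 < T - s := by linarith
        have h4 : T - t₀ < (n : ℝ) * (T - s) := by
          rw [div_lt_iff₀ hTs] at hn; linarith
        have h3 : (T - t₀) / (n + 1) ≤ T - s := by
          rw [div_le_iff₀ (hupos n)]
          nlinarith [hTs.le]
        simp only [hu]; linarith
      · rintro ⟨n, h1, h2⟩
        exact ⟨h1, lt_of_le_of_lt h2 (humem n).2⟩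
    have hmeasIoo : AEStronglyMeasurable x' (volume.restrict (Ioo t₀ T)) := by
      rw [hUnion, aestronglyMeasurable_iUnion_iff]
      intro n
      have h5 := (hint t₀ ht₀mem (u n) (humem n)).1
      rw [intervalIntegrable_iff_integrableOn_Ioc_of_le (humem n).1] at h5
      exact h5.aestronglyMeasurable
    have hintIoo : IntegrableOn x' (Ioo t₀ T) := by
      refine Integrable.mono' (g := fun _ => M) ?_ hmeasIoo ?_
      · exact integrableOn_const measure_Ioo_lt_top.ne
      · filter_upwards [ae_restrict_mem measurableSet_Ioo, ae_restrict_of_ae hbd]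
          with t ht hb
        exact hb ⟨ht.1.le, ht.2⟩
    have hIT : IntervalIntegrable x' volume t₀ T := by
      rw [intervalIntegrable_iff_integrableOn_Ioc_of_le hT.le]
      exact hintIoo.congr_set_ae (Ioo_ae_eq_Ioc (μ := volume) (a := t₀) (b := T)).symm
    set y : E := x t₀ + ∫ τ in t₀..T, x' τ with hy
    have hprim : ContinuousOn (fun s => ∫ τ in t₀..s, x' τ) (Icc t₀ T) := by
      have h6 := intervalIntegral.continuousOn_primitive_interval (a := t₀) (b := T)
        (f := x') (μ := volume) ?_
      · rwa [uIcc_of_le hT.le] at h6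
      · rw [uIcc_of_le hT.le]
        exact hintIoo.congr_set_ae (Ioo_ae_eq_Icc (μ := volume) (a := t₀) (b := T)).symm
    haveI hNB : (𝓝[Ico t₀ T] T).NeBot := by
      apply mem_closure_iff_nhdsWithin_neBot.1
      rw [closure_Ico hT.ne]
      exact ⟨hT.le, le_refl _⟩
    have hlim : Tendsto x (𝓝[Ico t₀ T] T) (𝓝 y) := by
      have h1 : Tendsto (fun s => x t₀ + ∫ τ in t₀..s, x' τ) (𝓝[Ico t₀ T] T) (𝓝 y) := by
        refine Tendsto.const_add _ ?_
        exact (hprim T ⟨hT.le, le_refl _⟩).tendsto.mono_left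
          (nhdsWithin_mono _ Ico_subset_Icc_self)
      refine h1.congr' ?_
      filter_upwards [self_mem_nhdsWithin] with s hs
      have h7 := (hint t₀ ht₀mem s hs).2
      have : x s = x t₀ + (x s - x t₀) := by abel
      rw [this, h7]
    have hyD : y ∈ D := by
      apply hcl
      exact mem_closure_of_tendsto hlim
        (by filter_upwards [self_mem_nhdsWithin] with s hs; exact mem_image_of_mem x hs)
    obtain ⟨T', hTT', z, z', ⟨hzc, hzae, hzint⟩, hzT⟩ := hadm y hyD T hT.le
    have hTmem : T ∈ Ico T T' := ⟨le_refl _, hTT'⟩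
    set w : ℝ → E := fun t => if t < T then x t else z t with hw
    set w' : ℝ → E := fun t => if t < T then x' t else z' t with hw'
    have hwx : ∀ t, t < T → w t = x t := fun t ht => if_pos ht
    have hwz : ∀ t, T ≤ t → w t = z t := fun t ht => if_neg (not_lt.2 ht)
    have hw'x : ∀ t, t < T → w' t = x' t := fun t ht => if_pos ht
    have hw'z : ∀ t, T ≤ t → w' t = z' t := fun t ht => if_neg (not_lt.2 ht)
    have hwT : w T = y := by rw [hwz T (le_refl _), hzT]
    -- continuity of w
    have hwcont : ContinuousOn w (Ico t₀ T') := by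
      intro t ht
      rcases lt_trichotomy t T with hlt | heq | hgt
      · have h2 : Ico t₀ T' ∩ Iio T = Ico t₀ T := by
          ext s; simp only [mem_inter_iff, mem_Ico, mem_Iio]
          exact ⟨fun ⟨⟨a, _⟩, b⟩ => ⟨a, b⟩, fun ⟨a, b⟩ => ⟨⟨a, lt_trans b hTT'⟩, b⟩⟩
        have h1 : ContinuousWithinAt w (Ico t₀ T' ∩ Iio T) t := by
          rw [h2]
          exact (hcont t ⟨ht.1, hlt⟩).congr (fun s hs => hwx s hs.2) (hwx t hlt)
        exact (continuousWithinAt_inter (Iio_mem_nhds hlt)).1 h1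
      · subst heq
        have h1 : ContinuousWithinAt w (Ico t₀ t) t := by
          have h8 : Tendsto w (𝓝[Ico t₀ t] t) (𝓝 y) := by
            refine hlim.congr' ?_
            filter_upwards [self_mem_nhdsWithin] with s hs
            exact (hwx s hs.2).symm
          simpa [ContinuousWithinAt, hwT] using h8
        have h2 : ContinuousWithinAt w (Ico t T') t :=
          (hzc t hTmem).congr (fun s hs => hwz s hs.1) (hwz t (le_refl _))
        have h3 := h1.union h2
        rwa [Ico_union_Ico_eq_Ico ht.1 (le_of_lt hTT')] at h3
      · have h0 : ContinuousWithinAt w (Ico T T') t :=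
          (hzc t ⟨hgt.le, ht.2⟩).congr (fun s hs => hwz s hs.1) (hwz t hgt.le)
        have h1 : ContinuousWithinAt w (Ico t₀ T' ∩ Ioi T) t :=
          h0.mono (fun s hs => ⟨hs.2.le, hs.1.2⟩)
        exact (continuousWithinAt_inter (Ioi_mem_nhds hgt)).1 h1
    -- a.e. derivative of w
    have hwae : ∀ᵐ t, t ∈ Ico t₀ T' → HasDerivAt w (w' t) t ∧ w' t ∈ F (w t) t := by
      filter_upwards [hae, hzae, hneT] with t h1 h2 h3 ht
      rcases h3.lt_or_gt with hlt | hgt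
      · obtain ⟨hd, hm⟩ := h1 ⟨ht.1, hlt⟩
        have hev : w =ᶠ[𝓝 t] x :=
          Filter.eventually_of_mem (Iio_mem_nhds hlt) (fun s hs => hwx s hs)
        rw [hw'x t hlt, hwx t hlt]
        exact ⟨hd.congr_of_eventuallyEq hev, hm⟩
      · obtain ⟨hd, hm⟩ := h2 ⟨hgt.le, ht.2⟩
        have hev : w =ᶠ[𝓝 t] z :=
          Filter.eventually_of_mem (Ioi_mem_nhds hgt) (fun s hs => hwz s (le_of_lt hs))
        rw [hw'z t hgt.le, hwz t hgt.le]
        exact ⟨hd.congr_of_eventuallyEq hev, hm⟩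
    -- integrability of w' up to T
    have hIIT : IntervalIntegrable w' volume t₀ T := by
      rw [intervalIntegrable_iff_integrableOn_Ioc_of_le hT.le]
      rw [intervalIntegrable_iff_integrableOn_Ioc_of_le hT.le] at hIT
      refine hIT.congr ?_
      filter_upwards [ae_restrict_of_ae hneT, ae_restrict_mem measurableSet_Ioc]
        with s hs1 hs2
      exact (hw'x s (lt_of_le_of_ne hs2.2 hs1)).symm
    have hIntT : ∫ τ in t₀..T, w' τ = ∫ τ in t₀..T, x' τ := by
      refine intervalIntegral.integral_congr_ae ?_
      filter_upwards [hneT] with s hs1 hs2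
      rw [uIoc_of_le hT.le] at hs2
      exact hw'x s (lt_of_le_of_ne hs2.2 hs1)
    -- key identity
    have hkey : ∀ t ∈ Ico t₀ T', IntervalIntegrable w' volume t₀ t ∧
        w t - w t₀ = ∫ τ in t₀..t, w' τ := by
      intro t ht
      rcases lt_or_ge t T with hlt | hge
      · obtain ⟨hii, heq⟩ := hint t₀ ht₀mem t ⟨ht.1, hlt⟩
        have hEqOn : EqOn w' x' (uIcc t₀ t) := by
          intro s hs
          rw [uIcc_of_le ht.1] at hs
          exact hw'x s (lt_of_le_of_lt hs.2 hlt)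
        constructor
        · rw [intervalIntegrable_iff]
          rw [intervalIntegrable_iff] at hii
          exact hii.congr_fun (fun s hs => (hEqOn (uIoc_subset_uIcc hs)).symm)
            measurableSet_uIoc
        · rw [intervalIntegral.integral_congr hEqOn, hwx t hlt, hwx t₀ hT, heq]
      · obtain ⟨hzi, hzeq⟩ := hzint T hTmem t ⟨hge, ht.2⟩
        have hEqOn : EqOn w' z' (uIcc T t) := by
          intro s hs
          rw [uIcc_of_le hge] at hs
          exact hw'z s hs.1
        have hwzi : IntervalIntegrable w' volume T t := by
          rw [intervalIntegrable_iff]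
          rw [intervalIntegrable_iff] at hzi
          exact hzi.congr_fun (fun s hs => (hEqOn (uIoc_subset_uIcc hs)).symm)
            measurableSet_uIoc
        refine ⟨hIIT.trans hwzi, ?_⟩
        have e2 : (∫ τ in t₀..T, w' τ) + ∫ τ in T..t, w' τ = ∫ τ in t₀..t, w' τ :=
          intervalIntegral.integral_add_adjacent_intervals hIIT hwzi
        rw [← e2, hIntT, intervalIntegral.integral_congr hEqOn,
          hwz t hge, hwx t₀ hT, ← hzeq, hzT, hy]
        abel
    -- w is a solution on Ico t₀ T'
    have hwint : ∀ s ∈ Ico t₀ T', ∀ t ∈ Ico t₀ T', IntervalIntegrable w' volume s t ∧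
        w t - w s = ∫ τ in s..t, w' τ := by
      intro s hs t ht
      obtain ⟨his, hes⟩ := hkey s hs
      obtain ⟨hit, het⟩ := hkey t ht
      refine ⟨his.symm.trans hit, ?_⟩
      have h9 := intervalIntegral.integral_interval_sub_left hit his
      rw [← h9, ← hes, ← het]
      abel
    have hJ := hmaxprop w w' (Ico t₀ T')
      (Or.inr ⟨T', lt_trans hT hTT', rfl⟩)
      ⟨hwcont, hwae, hwint⟩
      (Ico_subset_Ico_right hTT'.le)
      (fun t ht => hwx t ht.2)
    have hTin : T ∈ Ico t₀ T' := ⟨hT.le, hTT'⟩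
    rw [hJ] at hTin
    exact lt_irrefl T hTin.2
  · -- incomplete case: all interval integrals are junk 0
    have hjunk : ∀ (f : ℝ → E) (a b : ℝ), ∫ τ in a..b, f τ = 0 := by
      intro f a b
      rw [intervalIntegral]
      rw [MeasureTheory.integral_def, MeasureTheory.integral_def]
      simp [hC]
    have hconst : ∀ t ∈ Ico t₀ T, x t = x t₀ := by
      intro t ht
      have h1 := (hint t₀ ht₀mem t ht).2
      rw [hjunk] at h1
      exact sub_eq_zero.1 h1
    have hcD : x t₀ ∈ D := hcl (subset_closure (mem_image_of_mem x ht₀mem))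
    obtain ⟨T', hTT', z, z', ⟨hzc, hzae, hzint⟩, hzT⟩ := hadm (x t₀) hcD T hT.le
    have hTmem : T ∈ Ico T T' := ⟨le_refl _, hTT'⟩
    have hzconst : ∀ t ∈ Ico T T', z t = x t₀ := by
      intro t ht
      have h1 := (hzint T hTmem t ht).2
      rw [hjunk] at h1
      rw [sub_eq_zero.1 h1, hzT]
    have hnet₀ : ∀ᵐ t : ℝ ∂volume, t ≠ t₀ := by
      rw [ae_iff]
      refine measure_mono_null (fun t ht => ?_) (measure_singleton t₀)
      simpa using not_not.1 ht
    have h0x : ∀ᵐ t, t ∈ Ioo t₀ T → (0:E) ∈ F (x t₀) t := by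
      filter_upwards [hae] with t h1 ht
      obtain ⟨hd, hm⟩ := h1 ⟨ht.1.le, ht.2⟩
      have hev : x =ᶠ[𝓝 t] (fun _ => x t₀) := by
        refine Filter.eventually_of_mem (Ioo_mem_nhds ht.1 ht.2) (fun s hs => ?_)
        exact hconst s ⟨hs.1.le, hs.2⟩
      have h0 : HasDerivAt x (0:E) t := (hasDerivAt_const t (x t₀)).congr_of_eventuallyEq hev
      have hx0 : x' t = 0 := hd.unique h0
      rw [← hconst t ⟨ht.1.le, ht.2⟩, ← hx0]
      exact hm
    have h0z : ∀ᵐ t, t ∈ Ioo T T' → (0:E) ∈ F (x t₀) t := by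
      filter_upwards [hzae] with t h1 ht
      obtain ⟨hd, hm⟩ := h1 ⟨ht.1.le, ht.2⟩
      have hev : z =ᶠ[𝓝 t] (fun _ => x t₀) := by
        refine Filter.eventually_of_mem (Ioo_mem_nhds ht.1 ht.2) (fun s hs => ?_)
        exact hzconst s ⟨hs.1.le, hs.2⟩
      have h0 : HasDerivAt z (0:E) t := (hasDerivAt_const t (x t₀)).congr_of_eventuallyEq hev
      have hz0 : z' t = 0 := hd.unique h0
      rw [← hzconst t ⟨ht.1.le, ht.2⟩, ← hz0]
      exact hm
    have hwsol : IsSolOn F (fun _ => x t₀) (fun _ => (0:E)) (Ico t₀ T') := by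
      refine ⟨continuousOn_const, ?_, ?_⟩
      · filter_upwards [h0x, h0z, hneT, hnet₀] with t h1 h2 h3 h4 ht
        refine ⟨hasDerivAt_const t (x t₀), ?_⟩
        rcases h3.lt_or_gt with hlt | hgt
        · exact h1 ⟨lt_of_le_of_ne ht.1 (Ne.symm h4), hlt⟩
        · exact h2 ⟨hgt, ht.2⟩
      · intro s hs t ht
        refine ⟨intervalIntegrable_const, ?_⟩
        rw [hjunk]
        abel
    have hJ := hmaxprop (fun _ => x t₀) (fun _ => (0:E)) (Ico t₀ T')
      (Or.inr ⟨T', lt_trans hT hTT', rfl⟩) hwsol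
      (Ico_subset_Ico_right hTT'.le)
      (fun t ht => (hconst t ht).symm)
    have hTin : T ∈ Ico t₀ T' := ⟨hT.le, hTT'⟩
    rw [hJ] at hTin
    exact lt_irrefl T hTin.2
end
end

section
/- Let U : Ω → ℝ be locally Lipschitz and regular (in Clarke's sense), where Ω = D × I, and let x : I → ℝⁿ be locally absolutely continuous. If at a point t the derivatives ẋ(t) and (d/dt)U(x(t),t) both exist, then pᵀ[ẋ(t);1] = (d/dt)U(x(t),t) for every p in the Clarke generalized gradient ∂U(x(t),t). -/
open Filter MeasureTheory Set Topology Metric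

noncomputable section

private lemma dirDeriv_of_curve {G : Type*} [NormedAddCommGroup G] [NormedSpace ℝ G]
    (U : G → ℝ) (hU : LocallyLipschitz U) (c : ℝ → G) (w : G) (t : ℝ)
    (hc : HasDerivAt c w t) (d : ℝ) (hd : HasDerivAt (fun s => U (c s)) d t) :
    Tendsto (fun h : ℝ => (U (c t + h • w) - U (c t)) / h) (𝓝[>] (0:ℝ)) (𝓝 d) := by
  obtain ⟨K, s, hs, hK⟩ := hU (c t)
  -- B tends to d
  have hB : Tendsto (fun h : ℝ => (U (c (t + h)) - U (c t)) / h) (𝓝[>] (0:ℝ)) (𝓝 d) := by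
    have := hd.tendsto_slope_zero_right
    refine this.congr fun h => ?_
    simp [smul_eq_mul, div_eq_inv_mul]
  -- the error term
  have herr : Tendsto (fun h : ℝ => ‖h‖⁻¹ * ‖c (t + h) - c t - h • w‖) (𝓝[>] (0:ℝ)) (𝓝 0) := by
    have h1 := hasDerivAt_iff_tendsto.mp hc
    have h2 : Tendsto (fun h : ℝ => t + h) (𝓝[>] (0:ℝ)) (𝓝 t) := by
      have : Tendsto (fun h : ℝ => t + h) (𝓝 (0:ℝ)) (𝓝 t) := by
        simpa using (continuous_add_left t).tendsto (0:ℝ)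
      exact this.mono_left nhdsWithin_le_nhds
    have := h1.comp h2
    simpa [Function.comp_def, add_sub_cancel_left, Real.norm_eq_abs] using this
  have hA : Tendsto (fun h : ℝ => (U (c t + h • w) - U (c (t + h))) / h) (𝓝[>] (0:ℝ)) (𝓝 0) := by
    have hcc : Tendsto (fun h : ℝ => c (t + h)) (𝓝[>] (0:ℝ)) (𝓝 (c t)) := by
      have h2 : Tendsto (fun h : ℝ => t + h) (𝓝[>] (0:ℝ)) (𝓝 t) := by
        have : Tendsto (fun h : ℝ => t + h) (𝓝 (0:ℝ)) (𝓝 t) := by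
          simpa using (continuous_add_left t).tendsto (0:ℝ)
        exact this.mono_left nhdsWithin_le_nhds
      exact (hc.continuousAt.tendsto.comp h2)
    have hcw : Tendsto (fun h : ℝ => c t + h • w) (𝓝[>] (0:ℝ)) (𝓝 (c t)) := by
      have : Tendsto (fun h : ℝ => c t + h • w) (𝓝 (0:ℝ)) (𝓝 (c t + (0:ℝ) • w)) := by
        exact (continuous_const.add (continuous_id.smul continuous_const)).tendsto (0:ℝ)
      simpa using this.mono_left nhdsWithin_le_nhds
    have hmem1 : ∀ᶠ h in 𝓝[>] (0:ℝ), c (t + h) ∈ s := hcc (hs)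
    have hmem2 : ∀ᶠ h in 𝓝[>] (0:ℝ), c t + h • w ∈ s := hcw (hs)
    have hpos : ∀ᶠ h in 𝓝[>] (0:ℝ), (0:ℝ) < h := self_mem_nhdsWithin
    have hbound : ∀ᶠ h in 𝓝[>] (0:ℝ),
        ‖(U (c t + h • w) - U (c (t + h))) / h‖ ≤ K * (‖h‖⁻¹ * ‖c (t + h) - c t - h • w‖) := by
      filter_upwards [hmem1, hmem2, hpos] with h h1 h2 h3
      have hlip := hK.norm_sub_le h2 h1
      have : ‖(U (c t + h • w) - U (c (t + h))) / h‖
          = ‖U (c t + h • w) - U (c (t + h))‖ / h := by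
        rw [norm_div, Real.norm_of_nonneg h3.le]
      rw [this]
      rw [div_le_iff₀ h3]
      calc ‖U (c t + h • w) - U (c (t + h))‖ ≤ K * ‖c t + h • w - c (t + h)‖ := hlip
        _ = K * ‖c (t + h) - c t - h • w‖ := by
            rw [show c t + h • w - c (t + h) = -(c (t + h) - c t - h • w) by abel, norm_neg]
        _ = K * (‖h‖⁻¹ * ‖c (t + h) - c t - h • w‖) * h := by
            rw [Real.norm_of_nonneg h3.le]; field_simp
    have hKlim : Tendsto (fun h : ℝ => K * (‖h‖⁻¹ * ‖c (t + h) - c t - h • w‖))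
        (𝓝[>] (0:ℝ)) (𝓝 0) := by
      simpa using (herr.const_mul (K:ℝ))
    exact squeeze_zero_norm' hbound hKlim
  have := hA.add hB
  rw [zero_add] at this
  refine this.congr fun h => ?_
  rw [← add_div]; ring_nf

/-- for a locally Lipschitz function `U` which is Clarke-regular on
`Ω`, at any point where both `ẋ(t)` and `(d/dt)U(x(t),t)` exist, one has
`pᵀ[ẋ(t);1] = (d/dt)U(x(t),t)` for every `p` in the Clarke gradient `∂U(x(t),t)`. -/
theorem stmt2 {E : Type*} [NormedAddCommGroup E] [InnerProductSpace ℝ E]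
    (U : E × ℝ → ℝ) (Ω : Set (E × ℝ))
    (hU : LocallyLipschitz U) (hreg : ∀ z ∈ Ω, RegularAt U z)
    (x : ℝ → E) (t : ℝ) (hmem : (x t, t) ∈ Ω)
    (v : E) (hx : HasDerivAt x v t)
    (d : ℝ) (hd : HasDerivAt (fun s => U (x s, s)) d t) :
    ∀ p ∈ cGradP U (x t, t), pin p (v, 1) = d := by
  intro p hp
  set z : E × ℝ := (x t, t) with hz
  -- curve 1 : s ↦ (x s, s), derivative (v,1)
  have hc1 : HasDerivAt (fun s : ℝ => (x s, s)) ((v, 1) : E × ℝ) t :=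
    hx.prodMk (hasDerivAt_id t)
  have key1 : Tendsto (fun h : ℝ => (U (z + h • ((v,1) : E × ℝ)) - U z) / h)
      (𝓝[>] (0:ℝ)) (𝓝 d) := by
    simpa [hz] using dirDeriv_of_curve U hU (fun s : ℝ => (x s, s)) (v, 1) t hc1 d hd
  have e1 : cDD U z (v, 1) = d :=
    tendsto_nhds_unique (hreg z hmem (v, 1)) key1
  -- curve 2 : s ↦ (x (2t - s), 2t - s), derivative (-v,-1)
  have hlin : HasDerivAt (fun s : ℝ => 2 * t - s) (-1 : ℝ) t := by
    simpa using (hasDerivAt_id t).const_sub (2 * t)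
  have hx2 : HasDerivAt (fun s : ℝ => x (2 * t - s)) (-v) t := by
    have hg : HasDerivAt x v (2 * t - t) := by
      convert hx using 2; ring
    have hcomp := HasDerivAt.scomp (h := fun s : ℝ => 2 * t - s) (x := t) hg hlin
    simpa [Function.comp_def] using hcomp
  have hc2 : HasDerivAt (fun s : ℝ => ((x (2 * t - s), 2 * t - s) : E × ℝ))
      ((-v, -1) : E × ℝ) t := hx2.prodMk hlin
  have hd2 : HasDerivAt (fun s : ℝ => U (x (2 * t - s), 2 * t - s)) (-d) t := by
    have hg : HasDerivAt (fun s : ℝ => U (x s, s)) d (2 * t - t) := by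
      convert hd using 2; ring
    have hcomp := HasDerivAt.scomp (h := fun s : ℝ => 2 * t - s) (x := t) hg hlin
    simpa [Function.comp_def] using hcomp
  have key2 : Tendsto (fun h : ℝ => (U (z + h • ((-v,-1) : E × ℝ)) - U z) / h)
      (𝓝[>] (0:ℝ)) (𝓝 (-d)) := by
    have := dirDeriv_of_curve U hU (fun s : ℝ => ((x (2 * t - s), 2 * t - s) : E × ℝ))
      (-v, -1) t hc2 (-d) hd2
    have hzz : ((x (2 * t - t), 2 * t - t) : E × ℝ) = z := by
      rw [show 2 * t - t = t from by ring]
    simpa [hzz] using this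
  have e2 : cDD U z (-v, -1) = -d :=
    tendsto_nhds_unique (hreg z hmem (-v, -1)) key2
  have le1 : pin p (v, 1) ≤ d := e1 ▸ hp (v, 1)
  have le2 : pin p (-v, -1) ≤ -d := e2 ▸ hp (-v, -1)
  have hneg : pin p (-v, -1) = -pin p (v, 1) := by
    simp [pin, inner_neg_right]; ring
  rw [hneg] at le2
  linarith
end
end

section
/- Let F : ℝⁿ × [t₀,∞) ⇉ ℝⁿ, let 𝒰 = {U_i}_{i=1}^∞ be a countable collection of locally Lipschitz regular functions on Ω = D × I, and define the reduction G_{U}^{F}(x,t) = { q ∈ F(x,t) : ∃ a ∈ ℝ, ∀ p ∈ ∂U(x,t), pᵀ[q;1] = a } and the 𝒰-reduced inclusion F̃_𝒰(x,t) = ⋂_{i} G_{U_i}^{F}(x,t). If x : I → ℝⁿ is a solution to ẋ ∈ F(x,t) with x(t₀) ∈ D, then ẋ(t) ∈ F̃_𝒰(x(t),t) for almost all t in the interval before x exits D. -/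
open Filter MeasureTheory Set Topology Metric

noncomputable section

section Aux

/-- A `δ`-separated subset of `ℝ` is countable. -/
lemma sep_countable {s : Set ℝ} {δ : ℝ} (hδ : 0 < δ)
    (h : ∀ a ∈ s, ∀ b ∈ s, a ≠ b → δ ≤ |a - b|) : s.Countable := by
  have hinj : Set.InjOn (fun t => ⌊t / δ⌋) s := by
    intro a ha b hb hab
    by_contra hne
    have h1 := h a ha b hb hne
    have ha1 : (⌊a/δ⌋ : ℝ) ≤ a/δ := Int.floor_le _
    have ha2 : a/δ < ⌊a/δ⌋ + 1 := Int.lt_floor_add_one _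
    have hb1 : (⌊b/δ⌋ : ℝ) ≤ b/δ := Int.floor_le _
    have hb2 : b/δ < ⌊b/δ⌋ + 1 := Int.lt_floor_add_one _
    have he : (⌊a/δ⌋ : ℝ) = ⌊b/δ⌋ := by exact_mod_cast congrArg (fun z : ℤ => (z : ℝ)) hab
    have : |a/δ - b/δ| < 1 := by rw [abs_sub_lt_iff]; constructor <;> linarith
    rw [div_sub_div_same, abs_div, abs_of_pos hδ, div_lt_one hδ] at this
    linarith
  exact Set.countable_of_injective_of_countable_image (hinj) (Set.to_countable _)

/-- Half of the bad set: right-limit `a`, left-quotient-limit `b`, `a + b < 0`. -/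
lemma bad_lt_countable (g : ℝ → ℝ) :
    {t : ℝ | ∃ a b : ℝ,
      Tendsto (fun h => (g (t+h) - g t)/h) (𝓝[>] (0:ℝ)) (𝓝 a) ∧
      Tendsto (fun h => (g (t-h) - g t)/h) (𝓝[>] (0:ℝ)) (𝓝 b) ∧ a + b < 0}.Countable := by
  have key : {t : ℝ | ∃ a b : ℝ,
      Tendsto (fun h => (g (t+h) - g t)/h) (𝓝[>] (0:ℝ)) (𝓝 a) ∧
      Tendsto (fun h => (g (t-h) - g t)/h) (𝓝[>] (0:ℝ)) (𝓝 b) ∧ a + b < 0} ⊆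
      ⋃ r : ℚ, ⋃ δ : {q : ℚ // 0 < q},
        {t : ℝ | ∀ h : ℝ, 0 < h → h < ((δ : ℚ) : ℝ) →
          g (t+h) < g t + r * h ∧ g (t-h) < g t - r * h} := by
    rintro t ⟨a, b, hr, hl, hab⟩
    obtain ⟨r, har, hrb⟩ := exists_rat_btwn (show a < -b by linarith)
    have h1 : ∀ᶠ h in 𝓝[>] (0:ℝ), (g (t+h) - g t)/h < r :=
      hr.eventually_lt_const har
    have h2 : ∀ᶠ h in 𝓝[>] (0:ℝ), (g (t-h) - g t)/h < -r :=
      hl.eventually_lt_const (by linarith : b < -(r:ℝ))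
    obtain ⟨δ₀, hδ₀, hδ⟩ := ((nhdsGT_basis (0:ℝ)).eventually_iff).mp (h1.and h2)
    obtain ⟨δ, hq0, hqδ⟩ := exists_rat_btwn hδ₀
    refine Set.mem_iUnion.mpr ⟨r, Set.mem_iUnion.mpr ⟨⟨δ, by exact_mod_cast hq0⟩, ?_⟩⟩
    intro h h0 hlt
    have hin : h ∈ Ioo (0:ℝ) δ₀ := ⟨h0, lt_trans hlt hqδ⟩
    obtain ⟨e1, e2⟩ := hδ hin
    constructor
    · have := (div_lt_iff₀ h0).mp e1; linarith
    · have := (div_lt_iff₀ h0).mp e2; linarith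
  refine Set.Countable.mono key ?_
  refine Set.countable_iUnion fun r => Set.countable_iUnion fun δ => ?_
  apply sep_countable (show (0:ℝ) < (δ:ℚ) by exact_mod_cast δ.2)
  intro s hs u hu hne
  by_contra hcon
  push_neg at hcon
  rcases lt_or_gt_of_ne hne with hlt | hlt
  · have hd0 : 0 < u - s := by linarith
    have hdδ : u - s < ((δ:ℚ):ℝ) := by
      have : |s - u| = u - s := by rw [abs_sub_comm]; exact abs_of_pos hd0
      linarith [this ▸ hcon]
    have e1 := (hs (u - s) hd0 hdδ).1
    have e2 := (hu (u - s) hd0 hdδ).2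
    simp only [add_sub_cancel, sub_sub_cancel] at e1 e2
    linarith
  · have hd0 : 0 < s - u := by linarith
    have hdδ : s - u < ((δ:ℚ):ℝ) := by
      have : |s - u| = s - u := abs_of_pos hd0
      linarith [this ▸ hcon]
    have e1 := (hu (s - u) hd0 hdδ).1
    have e2 := (hs (s - u) hd0 hdδ).2
    simp only [add_sub_cancel, sub_sub_cancel] at e1 e2
    linarith

/-- The set of points where both one-sided quotient limits exist but do not cancel
is countable. -/
lemma bad_countable (g : ℝ → ℝ) :
    {t : ℝ | ∃ a b : ℝ,
      Tendsto (fun h => (g (t+h) - g t)/h) (𝓝[>] (0:ℝ)) (𝓝 a) ∧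
      Tendsto (fun h => (g (t-h) - g t)/h) (𝓝[>] (0:ℝ)) (𝓝 b) ∧ a + b ≠ 0}.Countable := by
  have hsub : {t : ℝ | ∃ a b : ℝ,
      Tendsto (fun h => (g (t+h) - g t)/h) (𝓝[>] (0:ℝ)) (𝓝 a) ∧
      Tendsto (fun h => (g (t-h) - g t)/h) (𝓝[>] (0:ℝ)) (𝓝 b) ∧ a + b ≠ 0} ⊆
      {t : ℝ | ∃ a b : ℝ,
        Tendsto (fun h => (g (t+h) - g t)/h) (𝓝[>] (0:ℝ)) (𝓝 a) ∧
        Tendsto (fun h => (g (t-h) - g t)/h) (𝓝[>] (0:ℝ)) (𝓝 b) ∧ a + b < 0} ∪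
      {t : ℝ | ∃ a b : ℝ,
        Tendsto (fun h => ((-g) (t+h) - (-g) t)/h) (𝓝[>] (0:ℝ)) (𝓝 a) ∧
        Tendsto (fun h => ((-g) (t-h) - (-g) t)/h) (𝓝[>] (0:ℝ)) (𝓝 b) ∧ a + b < 0} := by
    rintro t ⟨a, b, hr, hl, hab⟩
    rcases lt_or_gt_of_ne hab with hlt | hgt
    · exact Or.inl ⟨a, b, hr, hl, hlt⟩
    · refine Or.inr ⟨-a, -b, ?_, ?_, by linarith⟩
      · refine hr.neg.congr fun h => ?_
        simp [neg_div]; ring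
      · refine hl.neg.congr fun h => ?_
        simp [neg_div]; ring
  exact Set.Countable.mono hsub ((bad_lt_countable g).union (bad_lt_countable (-g)))

/-- Chain rule along a differentiable curve for regular locally Lipschitz functions:
the difference quotient of `U` along `γ` converges to `U°(γ 0; γ'(0))`. -/
lemma quot_tendsto {G : Type*} [NormedAddCommGroup G] [NormedSpace ℝ G]
    (U : G → ℝ) (hU : LocallyLipschitz U) {z v : G}
    (hreg : RegularAt U z)
    {γ : ℝ → G} (hγ0 : γ 0 = z) (hγ : HasDerivAt γ v 0) :
    Tendsto (fun h => (U (γ h) - U z)/h) (𝓝[>] (0:ℝ)) (𝓝 (cDD U z v)) := by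
  obtain ⟨K, s, hs, hK⟩ := hU z
  have hγc : ContinuousAt γ 0 := hγ.continuousAt
  have hmem1 : ∀ᶠ h in 𝓝 (0:ℝ), γ h ∈ s := hγc (hγ0 ▸ hs)
  have hmem2 : ∀ᶠ h in 𝓝 (0:ℝ), z + h • v ∈ s := by
    have hc : ContinuousAt (fun h : ℝ => z + h • v) 0 := by fun_prop
    apply hc
    simpa using hs
  have hlo : Tendsto (fun h : ℝ => ‖h‖⁻¹ * ‖γ h - γ 0 - (h - 0) • v‖) (𝓝 0) (𝓝 0) := by
    have := (hasDerivAt_iff_tendsto).mp hγ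
    simpa using this
  have hd : Tendsto (fun h => (U (γ h) - U (z + h • v))/h) (𝓝[>] (0:ℝ)) (𝓝 0) := by
    apply squeeze_zero_norm' (a := fun h => K * (‖h‖⁻¹ * ‖γ h - γ 0 - (h - 0) • v‖))
    · filter_upwards [hmem1.filter_mono nhdsWithin_le_nhds,
        hmem2.filter_mono nhdsWithin_le_nhds, self_mem_nhdsWithin] with h h1 h2 h0
      replace h0 : 0 < h := h0
      have hdist := hK.dist_le_mul _ h1 _ h2
      rw [Real.dist_eq] at hdist
      calc ‖(U (γ h) - U (z + h • v))/h‖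
          = |U (γ h) - U (z + h • v)| / h := by
            rw [Real.norm_eq_abs, abs_div, abs_of_pos h0]
        _ ≤ (K : ℝ) * dist (γ h) (z + h • v) / h := by
            exact div_le_div_of_nonneg_right hdist h0.le
        _ = K * (‖h‖⁻¹ * ‖γ h - γ 0 - (h - 0) • v‖) := by
            rw [dist_eq_norm, hγ0, sub_zero, sub_add_eq_sub_sub, Real.norm_eq_abs,
              abs_of_pos h0]
            field_simp
    · have h2 := (hlo.const_mul (K : ℝ)).mono_left (nhdsWithin_le_nhds (s := Ioi (0:ℝ)))
      simpa using h2
  have T1 := hreg v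
  have hadd := T1.add hd
  rw [add_zero] at hadd
  refine hadd.congr fun h => ?_
  ring

end Aux


/-- Theorem 1: reduction. If `x` is a solution of `ẋ ∈ F(x,t)` with
`x(t₀) ∈ D` and `𝒰` is a countable family of locally Lipschitz Clarke-regular
functions, then `ẋ(t) ∈ F̃_𝒰(x(t),t)` for almost every `t` before `x` exits `D`. -/
theorem stmt3 {E : Type*} [NormedAddCommGroup E] [InnerProductSpace ℝ E]
    (F : E → ℝ → Set E) (D : Set E) (hD : IsOpen D) (t₀ : ℝ)
    (𝒰 : ℕ → E × ℝ → ℝ)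
    (h𝒰 : ∀ i, LocallyLipschitz (𝒰 i) ∧ ∀ z, RegularAt (𝒰 i) z)
    (x x' : ℝ → E) (I : Set ℝ) (hI : IntervalFrom I t₀)
    (hsol : IsSolOn F x x' I) (h0 : x t₀ ∈ D) :
    ∀ᵐ t, (t ∈ I ∧ ∀ s ∈ I, s ≤ t → x s ∈ D) → x' t ∈ FRed 𝒰 F (x t) t := by
  classical
  have hae := hsol.2.1
  -- the bad sets where one-sided derivatives of t ↦ Uᵢ(x t, t) disagree
  have hbad : ∀ i : ℕ, volume {t : ℝ | ∃ a b : ℝ,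
      Tendsto (fun h => ((fun s => 𝒰 i (x s, s)) (t+h) - (fun s => 𝒰 i (x s, s)) t)/h)
        (𝓝[>] (0:ℝ)) (𝓝 a) ∧
      Tendsto (fun h => ((fun s => 𝒰 i (x s, s)) (t-h) - (fun s => 𝒰 i (x s, s)) t)/h)
        (𝓝[>] (0:ℝ)) (𝓝 b) ∧ a + b ≠ 0} = 0 :=
    fun i => (bad_countable (fun s => 𝒰 i (x s, s))).measure_zero _
  have hbadae : ∀ᵐ t, ∀ i : ℕ, t ∉ {t : ℝ | ∃ a b : ℝ,
      Tendsto (fun h => ((fun s => 𝒰 i (x s, s)) (t+h) - (fun s => 𝒰 i (x s, s)) t)/h)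
        (𝓝[>] (0:ℝ)) (𝓝 a) ∧
      Tendsto (fun h => ((fun s => 𝒰 i (x s, s)) (t-h) - (fun s => 𝒰 i (x s, s)) t)/h)
        (𝓝[>] (0:ℝ)) (𝓝 b) ∧ a + b ≠ 0} := by
    rw [ae_all_iff]
    intro i
    exact measure_eq_zero_iff_ae_notMem.mp (hbad i)
  filter_upwards [hae, hbadae] with t ht htb
  rintro ⟨htI, -⟩
  obtain ⟨hderiv, hF⟩ := ht htI
  refine Set.mem_iInter.mpr fun i => ?_
  set U := 𝒰 i with hU
  set z : E × ℝ := (x t, t) with hz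
  set v : E × ℝ := (x' t, 1) with hv
  set w : E × ℝ := (-(x' t), -1) with hw
  have hlip := (h𝒰 i).1
  have hreg := (h𝒰 i).2 z
  -- right curve
  have hcr : HasDerivAt (fun h : ℝ => ((x (t + h), t + h) : E × ℝ)) v 0 := by
    have h1 : HasDerivAt (fun h : ℝ => t + h) 1 0 := by
      simpa using (hasDerivAt_id (0:ℝ)).const_add t
    have h2 : HasDerivAt (fun h : ℝ => x (t + h)) (x' t) 0 := by
      have := HasDerivAt.scomp (0:ℝ) (by simpa using hderiv) h1
      simpa [Function.comp_def] using this
    exact h2.prodMk h1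
  have hcl : HasDerivAt (fun h : ℝ => ((x (t - h), t - h) : E × ℝ)) w 0 := by
    have h1 : HasDerivAt (fun h : ℝ => t - h) (-1) 0 := by
      simpa using (hasDerivAt_id (0:ℝ)).const_sub t
    have h2 : HasDerivAt (fun h : ℝ => x (t - h)) (-(x' t)) 0 := by
      have := HasDerivAt.scomp (0:ℝ) (by simpa using hderiv) h1
      simpa [Function.comp_def] using this
    exact h2.prodMk h1
  have ha : Tendsto (fun h => (U (x (t + h), t + h) - U z)/h) (𝓝[>] (0:ℝ))
      (𝓝 (cDD U z v)) :=
    quot_tendsto U hlip hreg (by simp [hz]) hcr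
  have hb : Tendsto (fun h => (U (x (t - h), t - h) - U z)/h) (𝓝[>] (0:ℝ))
      (𝓝 (cDD U z w)) :=
    quot_tendsto U hlip hreg (by simp [hz]) hcl
  -- the two limits cancel
  have hcancel : cDD U z v + cDD U z w = 0 := by
    by_contra hne
    exact htb i ⟨cDD U z v, cDD U z w, ha, hb, hne⟩
  refine ⟨hF, cDD U z v, fun p hp => ?_⟩
  have h1 : pin p v ≤ cDD U z v := hp v
  have h2 : pin p w ≤ cDD U z w := hp w
  have hpin : pin p w = -pin p v := by
    simp only [pin, hv, hw, inner_neg_right]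
    ring
  rw [hpin] at h2
  have : pin p v = cDD U z v := by linarith
  exact this
end
end

section
/- (Matrosov Claim 1.) Let γ, δ, Δ > 0 and let {Y_j}_{j=1}^{M} be continuous real-valued functions on the compact set closed-ball(0_m,γ) × D(δ,Δ), where D(δ,Δ) = {y ∈ ℝⁿ : δ ≤ ‖y‖ ≤ Δ}, having the Matrosov property. Then there exists ε > 0 such that for all (z,x) in the domain, Y_j(z,x) = 0 for all j ∈ {1,…,M−1} implies Y_M(z,x) ≤ −ε. -/
open Filter MeasureTheory Set Topology Metric

noncomputable section

/-- The compact domain `B̄(0_m,γ) × D(δ,Δ)` with `D(δ,Δ)` the closed annulus. -/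
def matDom (m n : ℕ) (γ δ Δ : ℝ) : Set (EuclideanSpace ℝ (Fin m) × EuclideanSpace ℝ (Fin n)) :=
  closedBall (0 : EuclideanSpace ℝ (Fin m)) γ ×ˢ
    {y : EuclideanSpace ℝ (Fin n) | δ ≤ ‖y‖ ∧ ‖y‖ ≤ Δ}

/-- The Matrosov property for an extended family `Y` (with the conventions
`Y 0 = 0` and `Y (M+1) = 1` supplied as hypotheses elsewhere). -/
def MatProp (m n : ℕ) (M : ℕ) (Y : ℕ → EuclideanSpace ℝ (Fin m) × EuclideanSpace ℝ (Fin n) → ℝ)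
    (γ δ Δ : ℝ) : Prop :=
  ∀ j ≤ M, ∀ z ∈ matDom m n γ δ Δ, (∀ i ≤ j, Y i z = 0) → Y (j+1) z ≤ 0

/-- Matrosov Claim 1: if continuous functions Y₁,…,Y_M have the
Matrosov property on the compact set B̄(0,γ) × D(δ,Δ), then there is ε > 0 such that
Y₁ = ⋯ = Y_{M−1} = 0 forces Y_M ≤ −ε. -/
theorem stmt13 (m n : ℕ) (γ δ Δ : ℝ) (hγ : 0 < γ) (hδ : 0 < δ) (hΔ : 0 < Δ)
    (M : ℕ) (hM : 1 ≤ M)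
    (Y : ℕ → EuclideanSpace ℝ (Fin m) × EuclideanSpace ℝ (Fin n) → ℝ)
    (hY0 : ∀ z, Y 0 z = 0) (hYtop : ∀ z, Y (M+1) z = 1)
    (hYc : ∀ j, 1 ≤ j → j ≤ M → ContinuousOn (Y j) (matDom m n γ δ Δ))
    (hmat : MatProp m n M Y γ δ Δ) :
    ∃ ε > 0, ∀ z ∈ matDom m n γ δ Δ,
      (∀ j, 1 ≤ j → j ≤ M - 1 → Y j z = 0) → Y M z ≤ -ε := by
  set D := matDom m n γ δ Δ with hD
  -- D is compact
  have hDcomp : IsCompact D := by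
    apply IsCompact.prod (isCompact_closedBall _ _)
    have : {y : EuclideanSpace ℝ (Fin n) | δ ≤ ‖y‖ ∧ ‖y‖ ≤ Δ}
        = closedBall (0 : EuclideanSpace ℝ (Fin n)) Δ ∩ {y | δ ≤ ‖y‖} := by
      ext y
      simp [mem_closedBall, dist_zero_right, and_comm]
    rw [this]
    exact (isCompact_closedBall _ _).inter_right
      (isClosed_le continuous_const continuous_norm)
  have hDclosed : IsClosed D := hDcomp.isClosed
  -- the zero set
  set K : Set (EuclideanSpace ℝ (Fin m) × EuclideanSpace ℝ (Fin n)) :=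
    D ∩ ⋂ j ∈ Finset.Icc 1 (M-1), (D ∩ (Y j) ⁻¹' {0}) with hK
  have hKsub : K ⊆ D := inter_subset_left
  have hKclosed : IsClosed K := by
    apply hDclosed.inter
    apply isClosed_biInter
    intro j hj
    have hj' : j ∈ Finset.Icc 1 (M-1) := hj
    rw [Finset.mem_Icc] at hj'
    exact (hYc j hj'.1 (le_trans hj'.2 (Nat.sub_le M 1))).preimage_isClosed_of_isClosed
      hDclosed isClosed_singleton
  have hKcomp : IsCompact K := hDcomp.of_isClosed_subset hKclosed hKsub
  have hKmem : ∀ z, z ∈ K ↔ z ∈ D ∧ ∀ j, 1 ≤ j → j ≤ M - 1 → Y j z = 0 := by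
    intro z
    simp only [hK, mem_inter_iff, mem_iInter, Finset.mem_Icc, mem_preimage,
      mem_singleton_iff]
    constructor
    · rintro ⟨h1, h2⟩
      exact ⟨h1, fun j hj1 hj2 => (h2 j ⟨hj1, hj2⟩).2⟩
    · rintro ⟨h1, h2⟩
      exact ⟨h1, fun j hj => ⟨h1, h2 j hj.1 hj.2⟩⟩
  -- any point in K has Y M < 0
  have hKneg : ∀ z ∈ K, Y M z < 0 := by
    intro z hz
    rw [hKmem] at hz
    obtain ⟨hzD, hz0⟩ := hz
    have hall : ∀ i ≤ M - 1, Y i z = 0 := by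
      intro i hi
      rcases Nat.eq_zero_or_pos i with h0 | h1
      · rw [h0]; exact hY0 z
      · exact hz0 i h1 hi
    have hle : Y M z ≤ 0 := by
      have := hmat (M-1) (Nat.sub_le M 1) z hzD hall
      rwa [Nat.sub_add_cancel hM] at this
    rcases lt_or_eq_of_le hle with h | h
    · exact h
    · exfalso
      have hall2 : ∀ i ≤ M, Y i z = 0 := by
        intro i hi
        rcases lt_or_eq_of_le hi with h2 | h2
        · exact hall i (Nat.le_sub_one_of_lt h2)
        · rw [h2]; exact h
      have := hmat M le_rfl z hzD hall2
      rw [hYtop z] at this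
      linarith
  rcases K.eq_empty_or_nonempty with hKe | hKne
  · refine ⟨1, one_pos, fun z hzD hz0 => ?_⟩
    exfalso
    have : z ∈ K := (hKmem z).mpr ⟨hzD, hz0⟩
    rw [hKe] at this
    exact this
  · have hYMc : ContinuousOn (Y M) K := (hYc M hM le_rfl).mono hKsub
    obtain ⟨z₀, hz₀K, hz₀max⟩ := hKcomp.exists_isMaxOn hKne hYMc
    refine ⟨-(Y M z₀), by linarith [hKneg z₀ hz₀K], fun z hzD hz0 => ?_⟩
    have hzK : z ∈ K := (hKmem z).mpr ⟨hzD, hz0⟩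
    have := hz₀max hzK
    simpa using this
end
end

section
/- (Matrosov Claim 2.) Let l ∈ {2,…,M}, ε̃ > 0, and Ỹ_l continuous on closed-ball(0_m,γ) × D(δ,Δ). Suppose whenever (z,x) lies in this compact set and Y_j(z,x) = 0 for all j ∈ {1,…,l−1}, it holds that Ỹ_l(z,x) ≤ −ε̃. Then there exists K_{l−1} > 0 such that whenever (z,x) lies in the set and Y_j(z,x) = 0 for all j ∈ {1,…,l−2}, it holds that K_{l−1} Y_{l−1}(z,x) + Ỹ_l(z,x) ≤ −ε̃/2. -/
open Filter MeasureTheory Set Topology Metric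

noncomputable section

/-- Matrosov Claim 2. -/
theorem stmt14 (m n : ℕ) (γ δ Δ : ℝ) (hγ : 0 < γ) (hδ : 0 < δ) (hΔ : 0 < Δ)
    (M : ℕ) (hM : 1 ≤ M)
    (Y : ℕ → EuclideanSpace ℝ (Fin m) × EuclideanSpace ℝ (Fin n) → ℝ)
    (hY0 : ∀ z, Y 0 z = 0) (hYtop : ∀ z, Y (M+1) z = 1)
    (hYc : ∀ j, 1 ≤ j → j ≤ M → ContinuousOn (Y j) (matDom m n γ δ Δ))
    (hmat : MatProp m n M Y γ δ Δ)
    (l : ℕ) (hl2 : 2 ≤ l) (hlM : l ≤ M) (ε : ℝ) (hε : 0 < ε)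
    (Yt : EuclideanSpace ℝ (Fin m) × EuclideanSpace ℝ (Fin n) → ℝ)
    (hYtc : ContinuousOn Yt (matDom m n γ δ Δ))
    (hYt : ∀ z ∈ matDom m n γ δ Δ,
      (∀ j, 1 ≤ j → j ≤ l - 1 → Y j z = 0) → Yt z ≤ -ε) :
    ∃ K > (0:ℝ), ∀ z ∈ matDom m n γ δ Δ,
      (∀ j, 1 ≤ j → j ≤ l - 2 → Y j z = 0) →
      K * Y (l-1) z + Yt z ≤ -ε / 2 := by
  classical
  set D := matDom m n γ δ Δ with hDdef
  have hDcl : IsClosed D := by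
    apply IsClosed.prod
    · exact Metric.isClosed_closedBall
    · have h1 : IsClosed {y : EuclideanSpace ℝ (Fin n) | δ ≤ ‖y‖} :=
        isClosed_le continuous_const continuous_norm
      have h2 : IsClosed {y : EuclideanSpace ℝ (Fin n) | ‖y‖ ≤ Δ} :=
        isClosed_le continuous_norm continuous_const
      have : {y : EuclideanSpace ℝ (Fin n) | δ ≤ ‖y‖ ∧ ‖y‖ ≤ Δ}
          = {y | δ ≤ ‖y‖} ∩ {y | ‖y‖ ≤ Δ} := rfl
      rw [this]
      exact h1.inter h2
  have hDcp : IsCompact D := by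
    have hbig : IsCompact ((closedBall (0 : EuclideanSpace ℝ (Fin m)) γ) ×ˢ
        (closedBall (0 : EuclideanSpace ℝ (Fin n)) Δ)) :=
      (isCompact_closedBall _ _).prod (isCompact_closedBall _ _)
    refine hbig.of_isClosed_subset hDcl ?_
    rintro ⟨a, b⟩ ⟨ha, hb⟩
    exact ⟨ha, mem_closedBall_zero_iff.2 hb.2⟩
  set S : Set (EuclideanSpace ℝ (Fin m) × EuclideanSpace ℝ (Fin n)) :=
    D ∩ ⋂ j ∈ Finset.Icc 1 (l-2), (D ∩ (Y j) ⁻¹' {0}) with hSdef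
  have hScl : IsClosed S := by
    apply hDcl.inter
    apply isClosed_biInter
    intro j hj
    have hj' : 1 ≤ j ∧ j ≤ l - 2 := Finset.mem_Icc.mp hj
    exact (hYc j hj'.1 (by omega)).preimage_isClosed_of_isClosed hDcl isClosed_singleton
  have hSsub : S ⊆ D := inter_subset_left
  have hScp : IsCompact S := hDcp.of_isClosed_subset hScl hSsub
  have mem_S : ∀ z, z ∈ S ↔ (z ∈ D ∧ ∀ j, 1 ≤ j → j ≤ l - 2 → Y j z = 0) := by
    intro z
    constructor
    · rintro ⟨hzD, hzI⟩
      refine ⟨hzD, fun j h1 h2 => ?_⟩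
      have := mem_iInter₂.1 hzI j (Finset.mem_Icc.2 ⟨h1, h2⟩)
      exact this.2
    · rintro ⟨hzD, hz0⟩
      refine ⟨hzD, mem_iInter₂.2 fun j hj => ?_⟩
      simp only [Finset.mem_Icc] at hj
      exact ⟨hzD, hz0 j hj.1 hj.2⟩
  set A : Set (EuclideanSpace ℝ (Fin m) × EuclideanSpace ℝ (Fin n)) :=
    S ∩ (D ∩ Yt ⁻¹' (Ici (-ε/2))) with hAdef
  have hAcl : IsClosed A :=
    hScl.inter (hYtc.preimage_isClosed_of_isClosed hDcl isClosed_Ici)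
  have hAsub : A ⊆ D := fun z hz => hz.2.1
  have hAsubS : A ⊆ S := fun z hz => hz.1
  have hAcp : IsCompact A := hDcp.of_isClosed_subset hAcl hAsub
  -- On S, Y (l-1) ≤ 0 by the Matrosov property.
  have hYl1 : ∀ z ∈ S, Y (l-1) z ≤ 0 := by
    intro z hz
    obtain ⟨hzD, hz0⟩ := (mem_S z).1 hz
    have hm := hmat (l-2) (by omega) z hzD (fun i hi => by
      rcases Nat.eq_zero_or_pos i with h0 | h1
      · simpa [h0] using hY0 z
      · exact hz0 i h1 hi)
    have heq : l - 2 + 1 = l - 1 := by omega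
    rwa [heq] at hm
  -- On A, Y (l-1) < 0.
  have hYlt : ∀ z ∈ A, Y (l-1) z < 0 := by
    intro z hz
    obtain ⟨hzS, hzD, hzY⟩ := hz
    refine lt_of_le_of_ne (hYl1 z hzS) ?_
    intro habs
    have hall : ∀ j, 1 ≤ j → j ≤ l - 1 → Y j z = 0 := by
      intro j h1 h2
      rcases Nat.lt_or_ge j (l-1) with h | h
      · exact ((mem_S z).1 hzS).2 j h1 (by omega)
      · have : j = l - 1 := by omega
        rw [this]; exact habs
    have h1 := hYt z hzD hall
    have h2 : (-ε/2 : ℝ) ≤ Yt z := hzY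
    linarith
  -- Case split on whether A is empty.
  rcases A.eq_empty_or_nonempty with hAe | hAne
  · refine ⟨1, one_pos, fun z hzD hz0 => ?_⟩
    have hzS : z ∈ S := (mem_S z).2 ⟨hzD, hz0⟩
    have hzY : Yt z < -ε/2 := by
      by_contra h
      push_neg at h
      have : z ∈ A := ⟨hzS, hzD, h⟩
      rw [hAe] at this
      exact this
    have := hYl1 z hzS
    nlinarith
  · obtain ⟨w, hw, hwmax⟩ := hAcp.exists_isMaxOn hAne
      ((hYc (l-1) (by omega) (by omega)).mono hAsub)
    obtain ⟨c, hc, hcmax⟩ := hAcp.exists_isMaxOn hAne (hYtc.mono hAsub)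
    set η : ℝ := -(Y (l-1) w) with hηdef
    have hη : 0 < η := by
      have := hYlt w hw
      simp only [hηdef]
      linarith
    set C : ℝ := Yt c with hCdef
    set K : ℝ := max 1 ((C + ε/2)/η) with hKdef
    have hK1 : (1:ℝ) ≤ K := le_max_left _ _
    have hKpos : (0:ℝ) < K := lt_of_lt_of_le one_pos hK1
    have hKη : C + ε/2 ≤ K * η := by
      have h1 : (C + ε/2)/η ≤ K := le_max_right _ _
      calc C + ε/2 = ((C + ε/2)/η) * η := (div_mul_cancel₀ _ hη.ne').symm
        _ ≤ K * η := mul_le_mul_of_nonneg_right h1 hη.le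
    refine ⟨K, hKpos, fun z hzD hz0 => ?_⟩
    have hzS : z ∈ S := (mem_S z).2 ⟨hzD, hz0⟩
    by_cases hzA : z ∈ A
    · have h1 : Y (l-1) z ≤ Y (l-1) w := hwmax hzA
      have h1' : Y (l-1) z ≤ -η := by simpa [hηdef] using h1
      have h2 : Yt z ≤ C := hcmax hzA
      nlinarith
    · have hzY : Yt z < -ε/2 := by
        by_contra h
        push_neg at h
        exact hzA ⟨hzS, hzD, h⟩
      have := hYl1 z hzS
      nlinarith
end
end

section
/- (Matrosov decrement combination.) Let {Y_j}_{j=1}^{M} be continuous functions with the Matrosov property on the compact set closed-ball(0_m,γ) × D(δ,Δ). Then there exist ζ > 0 and constants K₁,…,K_{M−1} > 0 such that Z(z,x) := Σ_{j=1}^{M−1} K_j Y_j(z,x) + Y_M(z,x) ≤ −ζ/2^{M−1} for all (z,x) in the set. -/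
open Filter MeasureTheory Set Topology Metric

noncomputable section

private lemma claim2 {X : Type*} [TopologicalSpace X] [T2Space X] {A : Set X} (hA : IsCompact A)
    (V W : X → ℝ) (hV : ContinuousOn V A) (hW : ContinuousOn W A)
    (hVle : ∀ z ∈ A, V z ≤ 0) {c : ℝ} (hc : 0 < c)
    (h : ∀ z ∈ A, V z = 0 → W z ≤ -c) :
    ∃ K > (0:ℝ), ∀ z ∈ A, K * V z + W z ≤ -c/2 := by
  rcases A.eq_empty_or_nonempty with rfl | hAne
  · exact ⟨1, one_pos, by simp⟩
  obtain ⟨z₁, hz₁A, hz₁max⟩ := hA.exists_isMaxOn hAne hW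
  set B := {z ∈ A | -c/2 ≤ W z} with hBdef
  have hBsub : B ⊆ A := fun z hz => hz.1
  have hBclosed : IsClosed B := by
    have : B = A ∩ W ⁻¹' (Ici (-c/2)) := by
      ext z; simp [hBdef, Set.mem_setOf_eq, Set.mem_preimage]
    rw [this]
    exact hW.preimage_isClosed_of_isClosed hA.isClosed isClosed_Ici
  rcases B.eq_empty_or_nonempty with hBe | hBne
  · refine ⟨1, one_pos, fun z hz => ?_⟩
    have hzW : W z < -c/2 := by
      by_contra hcon
      push_neg at hcon
      have : z ∈ B := ⟨hz, hcon⟩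
      rw [hBe] at this
      exact this
    have := hVle z hz
    linarith
  · have hBcomp : IsCompact B := hA.of_isClosed_subset hBclosed hBsub
    obtain ⟨z₂, hz₂B, hz₂max⟩ := hBcomp.exists_isMaxOn hBne (hV.mono hBsub)
    have hVz₂ : V z₂ < 0 := by
      rcases lt_or_eq_of_le (hVle z₂ (hBsub hz₂B)) with h' | h'
      · exact h'
      · have h1 := h z₂ (hBsub hz₂B) h'
        have h2 := hz₂B.2
        linarith
    set μ := -V z₂ with hμdef
    have hμpos : 0 < μ := by simp only [hμdef]; linarith
    refine ⟨max 1 ((W z₁ + c/2)/μ), lt_of_lt_of_le one_pos (le_max_left _ _), fun z hz => ?_⟩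
    set K := max 1 ((W z₁ + c/2)/μ) with hKdef
    have hKpos : (0:ℝ) < K := lt_of_lt_of_le one_pos (le_max_left _ _)
    by_cases hzB : -c/2 ≤ W z
    · have hzBmem : z ∈ B := ⟨hz, hzB⟩
      have hVz : V z ≤ -μ := by simpa [hμdef] using hz₂max hzBmem
      have hKμ : W z₁ + c/2 ≤ K * μ := (div_le_iff₀ hμpos).mp (le_max_right _ _)
      have hWz : W z ≤ W z₁ := hz₁max hz
      have h1 : K * V z ≤ K * (-μ) := mul_le_mul_of_nonneg_left hVz hKpos.le
      have h2 : K * (-μ) = -(K * μ) := by ring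
      clear_value K μ
      linarith
    · push_neg at hzB
      have : K * V z ≤ 0 := mul_nonpos_of_nonneg_of_nonpos hKpos.le (hVle z hz)
      linarith

/-- Matrosov decrement combination. -/
theorem stmt15 (m n : ℕ) (γ δ Δ : ℝ) (hγ : 0 < γ) (hδ : 0 < δ) (hΔ : 0 < Δ)
    (M : ℕ) (hM : 1 ≤ M)
    (Y : ℕ → EuclideanSpace ℝ (Fin m) × EuclideanSpace ℝ (Fin n) → ℝ)
    (hY0 : ∀ z, Y 0 z = 0) (hYtop : ∀ z, Y (M+1) z = 1)
    (hYc : ∀ j, 1 ≤ j → j ≤ M → ContinuousOn (Y j) (matDom m n γ δ Δ))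
    (hmat : MatProp m n M Y γ δ Δ) :
    ∃ ζ > (0:ℝ), ∃ K : ℕ → ℝ, (∀ j, 1 ≤ j → j ≤ M - 1 → 0 < K j) ∧
      ∀ z ∈ matDom m n γ δ Δ,
        (∑ j ∈ Finset.Icc 1 (M-1), K j * Y j z) + Y M z ≤ -ζ / 2^(M-1) := by
  set A := matDom m n γ δ Δ with hAdef
  have hAcomp : IsCompact A := by
    apply IsCompact.prod (isCompact_closedBall _ _)
    have : {y : EuclideanSpace ℝ (Fin n) | δ ≤ ‖y‖ ∧ ‖y‖ ≤ Δ} =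
        Metric.closedBall 0 Δ ∩ {y | δ ≤ ‖y‖} := by
      ext y; simp [mem_closedBall_zero_iff]; tauto
    rw [this]
    exact (isCompact_closedBall _ _).inter_right
      (isClosed_le continuous_const continuous_norm)
  have hYc' : ∀ j, j ≤ M → ContinuousOn (Y j) A := by
    intro j hj
    rcases Nat.eq_zero_or_pos j with rfl | hj1
    · exact continuousOn_const.congr fun z _ => hY0 z
    · exact hYc j hj1 hj
  set S : ℕ → Set (EuclideanSpace ℝ (Fin m) × EuclideanSpace ℝ (Fin n)) :=
    fun k => {z ∈ A | ∀ i ≤ k, Y i z = 0} with hSdef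
  have hScl : ∀ k, k ≤ M → IsClosed (S k) := by
    intro k hk
    have hrw : S k = ⋂ i ∈ Set.Iic k, (A ∩ Y i ⁻¹' {0}) := by
      ext z
      simp only [hSdef, Set.mem_setOf_eq, Set.mem_iInter, Set.mem_inter_iff,
        Set.mem_preimage, Set.mem_singleton_iff, Set.mem_Iic]
      constructor
      · rintro ⟨hzA, h0⟩ i hi; exact ⟨hzA, h0 i hi⟩
      · intro hall; exact ⟨(hall 0 (Nat.zero_le _)).1, fun i hi => (hall i hi).2⟩
    rw [hrw]
    exact isClosed_biInter fun i hi =>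
      (hYc' i (le_trans hi hk)).preimage_isClosed_of_isClosed hAcomp.isClosed
        isClosed_singleton
  have hScomp : ∀ k, k ≤ M → IsCompact (S k) :=
    fun k hk => hAcomp.of_isClosed_subset (hScl k hk) (fun z hz => hz.1)
  -- Claim 1
  have hSneg : ∀ z ∈ S (M-1), Y M z < 0 := by
    rintro z ⟨hzA, hz0⟩
    have h1 : Y M z ≤ 0 := by
      have := hmat (M-1) (by omega) z hzA hz0
      rwa [Nat.sub_add_cancel hM] at this
    rcases lt_or_eq_of_le h1 with h' | h'
    · exact h'
    · exfalso
      have hall : ∀ i ≤ M, Y i z = 0 := by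
        intro i hi
        rcases Nat.lt_or_ge i M with hi' | hi'
        · exact hz0 i (by omega)
        · have : i = M := by omega
          rw [this]; exact h'
      have := hmat M le_rfl z hzA hall
      rw [hYtop z] at this
      linarith
  obtain ⟨ε, hε, hεS⟩ : ∃ ε > (0:ℝ), ∀ z ∈ S (M-1), Y M z ≤ -ε := by
    rcases (S (M-1)).eq_empty_or_nonempty with hSe | hSne
    · exact ⟨1, one_pos, fun z hz => by rw [hSe] at hz; exact absurd hz (Set.notMem_empty z)⟩
    · obtain ⟨z₀, hz₀, hz₀max⟩ := (hScomp (M-1) (by omega)).exists_isMaxOn hSne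
        ((hYc' M le_rfl).mono fun z hz => hz.1)
      refine ⟨-(Y M z₀), by linarith [hSneg z₀ hz₀], fun z hz => by
        simpa using hz₀max hz⟩
  -- the induction
  have key : ∀ d, d ≤ M-1 → ∃ K : ℕ → ℝ, (∀ j, M-d ≤ j → j ≤ M-1 → 0 < K j) ∧
      ∀ z ∈ S (M-1-d), (∑ j ∈ Finset.Icc (M-d) (M-1), K j * Y j z) + Y M z ≤ -ε/2^d := by
    intro d
    induction d with
    | zero =>
      intro _
      refine ⟨fun _ => 1, fun j h1 h2 => by norm_num, fun z hz => ?_⟩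
      rw [Finset.Icc_eq_empty (by omega), Finset.sum_empty]
      simpa using hεS z (by simpa using hz)
    | succ d ih =>
      intro hd
      obtain ⟨K, hKpos, hKbound⟩ := ih (by omega)
      set a := M - 1 - (d+1) with hadef
      have ha1 : a + 1 = M - 1 - d := by omega
      have ha2 : a + 2 = M - d := by omega
      have haM : a ≤ M := by omega
      -- apply claim2 on S a
      have hWcont : ContinuousOn
          (fun z => (∑ j ∈ Finset.Icc (M-d) (M-1), K j * Y j z) + Y M z) (S a) := by
        apply ContinuousOn.add
        · apply continuousOn_finset_sum
          intro j hj
          simp only [Finset.mem_Icc] at hj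
          exact (continuousOn_const.mul ((hYc' j (by omega)).mono fun z hz => hz.1))
        · exact (hYc' M le_rfl).mono fun z hz => hz.1
      have hVle : ∀ z ∈ S a, Y (a+1) z ≤ 0 := fun z hz => hmat a haM z hz.1 hz.2
      have hcpos : (0:ℝ) < ε / 2^d := by positivity
      have hstep : ∀ z ∈ S a, Y (a+1) z = 0 →
          (∑ j ∈ Finset.Icc (M-d) (M-1), K j * Y j z) + Y M z ≤ -(ε/2^d) := by
        intro z hz hz0
        have hmem : z ∈ S (M-1-d) := by
          refine ⟨hz.1, fun i hi => ?_⟩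
          rcases Nat.lt_or_ge i (a+1) with hi' | hi'
          · exact hz.2 i (by omega)
          · have : i = a + 1 := by omega
            rw [this]; exact hz0
        have := hKbound z hmem
        rwa [neg_div] at this
      obtain ⟨K', hK'pos, hK'bound⟩ := claim2 (hScomp a haM) (Y (a+1)) _
        ((hYc' (a+1) (by omega)).mono fun z hz => hz.1) hWcont hVle hcpos hstep
      refine ⟨fun j => if j = a+1 then K' else K j, ?_, ?_⟩
      · intro j h1 h2
        show 0 < if j = a+1 then K' else K j
        by_cases hje : j = a + 1
        · simpa [hje] using hK'pos
        · rw [if_neg hje]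
          exact hKpos j (by omega) h2
      · intro z hz
        have hIcc : Finset.Icc (M-(d+1)) (M-1) = insert (a+1) (Finset.Icc (M-d) (M-1)) := by
          ext x
          simp only [Finset.mem_Icc, Finset.mem_insert]
          omega
        have hnotmem : a + 1 ∉ Finset.Icc (M-d) (M-1) := by
          simp only [Finset.mem_Icc]; omega
        rw [hIcc, Finset.sum_insert hnotmem]
        beta_reduce
        rw [if_pos rfl]
        have hcongr : ∑ j ∈ Finset.Icc (M-d) (M-1),
            (fun j => if j = a+1 then K' else K j) j * Y j z
            = ∑ j ∈ Finset.Icc (M-d) (M-1), K j * Y j z := by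
          apply Finset.sum_congr rfl
          intro j hj
          simp only [Finset.mem_Icc] at hj
          show (if j = a+1 then K' else K j) * Y j z = K j * Y j z
          rw [if_neg (by omega)]
        rw [hcongr]
        have := hK'bound z hz
        have heq : -(ε/2^d)/2 = -ε/2^(d+1) := by
          rw [pow_succ]; ring
        linarith [this, heq.symm.le]
  obtain ⟨K, hKpos, hKb⟩ := key (M-1) le_rfl
  refine ⟨ε, hε, K, ?_, ?_⟩
  · intro j h1 h2
    exact hKpos j (by omega) h2
  · intro z hz
    have h1 : M - (M-1) = 1 := by omega
    have h2 : M - 1 - (M-1) = 0 := by omega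
    have hzS : z ∈ S 0 := ⟨hz, fun i hi => by
      have : i = 0 := by omega
      rw [this]; exact hY0 z⟩
    have := hKb z (by rwa [h2])
    rwa [h1] at this
end
end

section
/- (Example reduction.) Let H(y) = {0} if |y| ≠ 1 and H(y) = [−1,1] if |y| = 1, and define F : ℝ² ⇉ ℝ² by F(x) = ({−x₁+x₂} + H(x₂)) × ({−x₁−x₂} + H(x₁)). With U as the piecewise-linear convex function of the previous item, the reduction G_U^F(x) = {q ∈ F(x) : pᵀq constant over p ∈ ∂U(x)} equals F(x) when |x₁| ≠ 1 and |x₂| ≠ 1, and is empty otherwise. Consequently, every locally absolutely continuous solution x(·) of ẋ ∈ F(x) satisfies ẋᵀ x = −‖x‖² a.e., and the inclusion is globally asymptotically stable at x = 0. -/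
open Filter MeasureTheory Set Topology Metric

noncomputable section

/-- `H(y) = {0}` if `|y| ≠ 1`, `[−1,1]` if `|y| = 1`. -/
noncomputable def exH (y : ℝ) : Set ℝ := if |y| = 1 then Icc (-1 : ℝ) 1 else {0}

/-- The set-valued map of Example 2. -/
noncomputable def exF : EuclideanSpace ℝ (Fin 2) → Set (EuclideanSpace ℝ (Fin 2)) :=
  fun x => {q | (∃ h ∈ exH (x 1), q 0 = -x 0 + x 1 + h) ∧
                (∃ h ∈ exH (x 0), q 1 = -x 0 - x 1 + h)}

/-- The piecewise-linear convex function of Example 2. -/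
noncomputable def exU : EuclideanSpace ℝ (Fin 2) → ℝ := fun x =>
  max (x 0 - 1) 0 - min (x 0 + 1) 0 + (max (x 1 - 1) 0 - min (x 1 + 1) 0)


-- ### Auxiliary development ###

/-- scalar piece -/
def phi (t : ℝ) : ℝ := max (t-1) 0 - min (t+1) 0

/-- gradient selection -/
def csel (t : ℝ) : ℝ := if t < -1 then -1 else if t ≤ 1 then 0 else 1

lemma phi_nonneg (u : ℝ) : 0 ≤ phi u := by
  have h1 : (0:ℝ) ≤ max (u-1) 0 := le_max_right _ _
  have h2 : min (u+1) 0 ≤ 0 := min_le_right _ _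
  simp only [phi]; linarith

lemma phi_ge_sub (u : ℝ) : u - 1 ≤ phi u := by
  have h1 : u - 1 ≤ max (u-1) 0 := le_max_left _ _
  have h2 : min (u+1) 0 ≤ 0 := min_le_right _ _
  simp only [phi]; linarith

lemma phi_ge_neg (u : ℝ) : -u - 1 ≤ phi u := by
  have h1 : (0:ℝ) ≤ max (u-1) 0 := le_max_right _ _
  have h2 : min (u+1) 0 ≤ u + 1 := min_le_left _ _
  simp only [phi]; linarith

lemma phi_one : phi 1 = 0 := by norm_num [phi]
lemma phi_negone : phi (-1) = 0 := by norm_num [phi]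
lemma csel_one : csel 1 = 0 := by norm_num [csel]
lemma csel_negone : csel (-1) = 0 := by norm_num [csel]

lemma csel_subgrad (t u : ℝ) : phi t + csel t * (u - t) ≤ phi u := by
  unfold csel
  split_ifs with h1 h2
  · have ht : phi t = -t - 1 := by
      have : max (t-1) 0 = 0 := max_eq_right (by linarith)
      have h2 : min (t+1) 0 = t + 1 := min_eq_left (by linarith)
      simp [phi, this, h2]; ring
    rw [ht]; have := phi_ge_neg u; linarith
  · have ht : phi t = 0 := by
      have ha : max (t-1) 0 = 0 := max_eq_right (by linarith)
      have hb : min (t+1) 0 = 0 := min_eq_right (by linarith)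
      simp [phi, ha, hb]
    rw [ht]; have := phi_nonneg u; linarith
  · have ht : phi t = t - 1 := by
      have ha : max (t-1) 0 = t - 1 := max_eq_left (by linarith)
      have hb : min (t+1) 0 = 0 := min_eq_right (by linarith)
      simp [phi, ha, hb]
    rw [ht]; have := phi_ge_sub u; linarith

lemma sgn_subgrad {σ : ℝ} (hσ : σ = 1 ∨ σ = -1) (u : ℝ) : phi σ + σ * (u - σ) ≤ phi u := by
  rcases hσ with rfl | rfl
  · rw [phi_one]; have := phi_ge_sub u; linarith
  · rw [phi_negone]; have := phi_ge_neg u; linarith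

lemma phi_lip (a b : ℝ) : |phi a - phi b| ≤ 2 * |a - b| := by
  have h1 : |max (a-1) 0 - max (b-1) 0| ≤ |(a-1) - (b-1)| := abs_max_sub_max_le_abs _ _ _
  have h2 : |min (a+1) 0 - min (b+1) 0| ≤ max |(a+1)-(b+1)| |0 - 0| := abs_min_sub_min_le_max _ _ _ _
  have e1 : (a-1) - (b-1) = a - b := by ring
  have e2 : (a+1) - (b+1) = a - b := by ring
  rw [e1] at h1
  rw [e2] at h2
  simp only [sub_self, abs_zero, max_eq_left (abs_nonneg (a-b))] at h2
  have : phi a - phi b = (max (a-1) 0 - max (b-1) 0) - (min (a+1) 0 - min (b+1) 0) := by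
    simp [phi]; ring
  rw [this]
  calc |_| ≤ |max (a-1) 0 - max (b-1) 0| + |min (a+1) 0 - min (b+1) 0| := abs_sub _ _
  _ ≤ 2 * |a - b| := by linarith

lemma phi_local {t : ℝ} (ht : |t| ≠ 1) :
    ∃ δ > 0, ∀ u, |u - t| < δ → phi u = phi t + csel t * (u - t) := by
  have ht1 : t ≠ 1 := fun h => ht (by rw [h]; norm_num)
  have ht2 : t ≠ -1 := fun h => ht (by rw [h]; norm_num)
  rcases lt_trichotomy t (-1) with h | h | h
  · refine ⟨-1 - t, by linarith, fun u hu => ?_⟩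
    have hu1 : u < -1 := by
      have := abs_lt.mp hu; linarith [this.2]
    have e1 : max (u-1) 0 = 0 := max_eq_right (by linarith)
    have e2 : min (u+1) 0 = u + 1 := min_eq_left (by linarith)
    have e3 : max (t-1) 0 = 0 := max_eq_right (by linarith)
    have e4 : min (t+1) 0 = t + 1 := min_eq_left (by linarith)
    have e5 : csel t = -1 := if_pos h
    simp [phi, e1, e2, e3, e4, e5]; ring
  · exact absurd h.symm (fun hh => ht2 hh.symm)
  · rcases lt_trichotomy t 1 with h' | h' | h'
    · refine ⟨min (1 - t) (t + 1), lt_min_iff.mpr ⟨by linarith, by linarith⟩, fun u hu => ?_⟩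
      have hm := lt_min_iff.mp hu
      have ha1 := abs_lt.mp hm.1
      have ha2 := abs_lt.mp hm.2
      have hb1 : u < 1 := by linarith [ha1.2]
      have hb2 : -1 < u := by linarith [ha2.1]
      have e1 : max (u-1) 0 = 0 := max_eq_right (by linarith)
      have e2 : min (u+1) 0 = 0 := min_eq_right (by linarith)
      have e3 : max (t-1) 0 = 0 := max_eq_right (by linarith)
      have e4 : min (t+1) 0 = 0 := min_eq_right (by linarith)
      have e5 : csel t = 0 := by rw [csel, if_neg (by linarith), if_pos (by linarith)]
      simp [phi, e1, e2, e3, e4, e5]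
    · exact absurd h' ht1
    · refine ⟨t - 1, by linarith, fun u hu => ?_⟩
      have hu1 := abs_lt.mp hu
      have hb1 : 1 < u := by linarith [hu1.1]
      have e1 : max (u-1) 0 = u - 1 := max_eq_left (by linarith)
      have e2 : min (u+1) 0 = 0 := min_eq_right (by linarith)
      have e3 : max (t-1) 0 = t - 1 := max_eq_left (by linarith)
      have e4 : min (t+1) 0 = 0 := min_eq_right (by linarith)
      have e5 : csel t = 1 := by rw [csel, if_neg (by linarith), if_neg (by linarith)]
      simp [phi, e1, e2, e3, e4, e5]

abbrev E2 := EuclideanSpace ℝ (Fin 2)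

def eP (a b : ℝ) : E2 := (WithLp.equiv 2 (Fin 2 → ℝ)).symm ![a, b]

@[simp] lemma eP_zero (a b : ℝ) : eP a b 0 = a := rfl
@[simp] lemma eP_one (a b : ℝ) : eP a b 1 = b := rfl

lemma inner_E2 (u w : E2) : (inner ℝ u w : ℝ) = u 0 * w 0 + u 1 * w 1 := by
  simp [PiLp.inner_apply, RCLike.inner_apply, conj_trivial, Fin.sum_univ_two]; ring

lemma coord_le (w : E2) (i : Fin 2) : |w i| ≤ ‖w‖ := by
  rw [EuclideanSpace.norm_eq, show |w i| = Real.sqrt (‖w i‖^2) by simp [Real.sqrt_sq_eq_abs]]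
  exact Real.sqrt_le_sqrt
    (Finset.single_le_sum (f := fun j => ‖w j‖^2) (fun j _ => sq_nonneg _) (Finset.mem_univ i))

lemma exU_eq (x : E2) : exU x = phi (x 0) + phi (x 1) := by
  simp only [exU, phi]

lemma add_smul_coord (y : E2) (h : ℝ) (v : E2) (i : Fin 2) : (y + h • v) i = y i + h * v i := rfl

lemma quot_le (v : E2) (y : E2) (h : ℝ) (hh : 0 < h) :
    (exU (y + h • v) - exU y) / h ≤ 2 * (|v 0| + |v 1|) := by
  rw [div_le_iff₀ hh]
  have l0 := (abs_le.mp (phi_lip (y 0 + h * v 0) (y 0))).2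
  have l1 := (abs_le.mp (phi_lip (y 1 + h * v 1) (y 1))).2
  simp only [add_sub_cancel_left, abs_mul, abs_of_pos hh] at l0 l1
  rw [exU_eq, exU_eq, add_smul_coord, add_smul_coord]
  nlinarith [abs_nonneg (v 0), abs_nonneg (v 1)]

lemma cDD_off {z : E2} (h0 : |z 0| ≠ 1) (h1 : |z 1| ≠ 1) (v : E2) :
    cDD exU z v = csel (z 0) * v 0 + csel (z 1) * v 1 := by
  obtain ⟨δ0, hδ0, H0⟩ := phi_local h0
  obtain ⟨δ1, hδ1, H1⟩ := phi_local h1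
  set δ := min δ0 δ1 with hδdef
  have hδ : 0 < δ := lt_min hδ0 hδ1
  have hn : (0:ℝ) < ‖v‖ + 1 := by positivity
  have hev : ∀ᶠ p : E2 × ℝ in (𝓝 z) ×ˢ (𝓝[>] (0:ℝ)),
      (exU (p.1 + p.2 • v) - exU p.1) / p.2 = csel (z 0) * v 0 + csel (z 1) * v 1 := by
    have hmem : (ball z (δ/2)) ×ˢ (Ioo (0:ℝ) (δ/(2*(‖v‖+1)))) ∈ (𝓝 z) ×ˢ (𝓝[>] (0:ℝ)) :=
      prod_mem_prod (ball_mem_nhds _ (by positivity))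
        (Ioo_mem_nhdsGT_of_mem ⟨le_refl _, by positivity⟩)
    filter_upwards [hmem]
    rintro ⟨y, h⟩ ⟨hy, hh1, hh2⟩
    dsimp only at hy hh1 hh2 ⊢
    have hyz : ∀ i : Fin 2, |y i - z i| < δ/2 := by
      intro i
      calc |y i - z i| = |(y - z) i| := by rfl
      _ ≤ ‖y - z‖ := coord_le _ _
      _ < δ/2 := by rwa [mem_ball, dist_eq_norm] at hy
    have hstep : ∀ i : Fin 2, |h * v i| < δ/2 := by
      intro i
      have h1' : |v i| ≤ ‖v‖ := coord_le _ _
      have : h * |v i| ≤ h * ‖v‖ := by nlinarith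
      rw [lt_div_iff₀ (by positivity)] at hh2
      rw [abs_mul, abs_of_pos hh1]
      nlinarith [abs_nonneg (v i), norm_nonneg v]
    have key : ∀ (i : Fin 2) (δi : ℝ) (Hi : ∀ u, |u - z i| < δi → phi u = phi (z i) + csel (z i) * (u - z i)),
        δ ≤ δi → phi (y i + h * v i) - phi (y i) = csel (z i) * (h * v i) := by
      intro i δi Hi hle
      have e1 : |y i + h * v i - z i| < δi := by
        calc |y i + h * v i - z i| = |(y i - z i) + h * v i| := by ring_nf
        _ ≤ |y i - z i| + |h * v i| := abs_add_le _ _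
        _ < δ := by have := hyz i; have := hstep i; linarith
        _ ≤ δi := hle
      have e2 : |y i - z i| < δi := lt_of_lt_of_le (by have := hyz i; linarith) hle
      rw [Hi _ e1, Hi _ e2]; ring
    have k0 := key 0 δ0 H0 (min_le_left _ _)
    have k1 := key 1 δ1 H1 (min_le_right _ _)
    rw [exU_eq, exU_eq, add_smul_coord, add_smul_coord]
    have : phi (y 0 + h * v 0) + phi (y 1 + h * v 1) - (phi (y 0) + phi (y 1))
        = h * (csel (z 0) * v 0 + csel (z 1) * v 1) := by rw [← sub_add_sub_comm, k0, k1]; ring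
    rw [this]
    field_simp
  rw [cDD, limsup_congr hev, limsup_const]

lemma cGrad_off {z : E2} (h0 : |z 0| ≠ 1) (h1 : |z 1| ≠ 1) :
    cGrad exU z ⊆ {eP (csel (z 0)) (csel (z 1))} := by
  intro p hp
  set g : E2 := eP (csel (z 0)) (csel (z 1)) with hg
  have key : ∀ v : E2, (inner ℝ p v : ℝ) ≤ (inner ℝ g v : ℝ) := by
    intro v
    have := hp v
    rw [cDD_off h0 h1 v] at this
    rw [inner_E2] at this; rw [inner_E2, inner_E2, hg]; simpa using this
  have h2 := key (p - g)
  have : (inner ℝ (p - g) (p - g) : ℝ) ≤ 0 := by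
    rw [inner_sub_left]; linarith
  have hz : p - g = 0 := by
    have := real_inner_self_nonpos.mp this
    exact this
  simp only [mem_singleton_iff]
  rw [← sub_eq_zero]; exact hz

lemma mem_cGrad_of_subgrad {z p : E2}
    (hsub : ∀ w : E2, exU z + (p 0 * (w 0 - z 0) + p 1 * (w 1 - z 1)) ≤ exU w) :
    p ∈ cGrad exU z := by
  intro v
  rw [inner_E2]
  set c := p 0 * v 0 + p 1 * v 1 with hc
  set B := 2 * (|v 0| + |v 1|) with hB
  set quot : E2 × ℝ → ℝ := fun q => (exU (q.1 + q.2 • v) - exU q.1) / q.2 with hquot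
  set m : ℝ → E2 × ℝ := fun h => (z, h) with hm
  set F := 𝓝[>] (0:ℝ) with hF
  have hmle : map m F ≤ (𝓝 z) ×ˢ F := Filter.Tendsto.prodMk tendsto_const_nhds tendsto_id
  have hcq : ∀ h ∈ Ioi (0:ℝ), c ≤ quot (m h) := by
    intro h hh
    have := hsub (z + h • v)
    simp only [add_smul_coord, add_sub_cancel_left] at this
    have h2 : exU z + h * c ≤ exU (z + h • v) := by rw [hc]; linarith [this]; 
    rw [hquot]
    simp only [hm]
    rw [le_div_iff₀ hh]
    linarith
  have hev0 : ∀ᶠ h in F, h ∈ Ioi (0:ℝ) := self_mem_nhdsWithin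
  have hBF : ∀ᶠ x in map m F, quot x ≤ B := by
    rw [eventually_map]
    filter_upwards [hev0] with h hh
    exact quot_le v z h hh
  have hcF : ∀ᶠ x in map m F, c ≤ quot x := by
    rw [eventually_map]
    filter_upwards [hev0] with h hh
    exact hcq h hh
  have hprodB : ∀ᶠ x in (𝓝 z) ×ˢ F, quot x ≤ B := by
    have h2 : ∀ᶠ x : E2 × ℝ in (𝓝 z) ×ˢ F, x.2 ∈ Ioi (0:ℝ) := hev0.prod_inr _
    filter_upwards [h2] with x hx
    exact quot_le v x.1 x.2 hx
  haveI : (map m F).NeBot := Filter.NeBot.map (by infer_instance) m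
  have step1 : c ≤ limsup quot (map m F) :=
    le_limsup_of_frequently_le hcF.frequently ⟨B, eventually_map.mpr hBF⟩
  have step2 : limsup quot (map m F) ≤ limsup quot ((𝓝 z) ×ˢ F) :=
    limsup_le_limsup_of_le hmle
      (IsBoundedUnder.isCoboundedUnder_le ⟨c, eventually_map.mpr hcF⟩)
      ⟨B, eventually_map.mpr hprodB⟩
  exact le_trans step1 step2

lemma subgrad_vec {z : E2} {a b : ℝ} (ha : ∀ u, phi (z 0) + a * (u - z 0) ≤ phi u)
    (hb : ∀ u, phi (z 1) + b * (u - z 1) ≤ phi u) : eP a b ∈ cGrad exU z :=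
  mem_cGrad_of_subgrad fun w => by
    have h1 := ha (w 0); have h2 := hb (w 1)
    rw [exU_eq, exU_eq]; simp only [eP_zero, eP_one]; linarith

lemma part1 {x : E2} (h0 : |x 0| ≠ 1) (h1 : |x 1| ≠ 1) : GRedA exU exF x = exF x := by
  apply Set.eq_of_subset_of_subset (sep_subset _ _)
  intro q hq
  refine ⟨hq, (inner ℝ (eP (csel (x 0)) (csel (x 1))) q : ℝ), fun p hp => ?_⟩
  have h := cGrad_off h0 h1 hp
  rw [mem_singleton_iff] at h
  rw [h]

lemma abs_one_cases {a : ℝ} (h : |a| = 1) : a = 1 ∨ a = -1 := (abs_eq one_pos.le).mp h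

lemma csel_of_abs_one {a : ℝ} (h : |a| = 1) : csel a = 0 := by
  rcases abs_one_cases h with rfl | rfl
  · exact csel_one
  · exact csel_negone

lemma part2 {x : E2} (hx : |x 0| = 1 ∨ |x 1| = 1) : GRedA exU exF x = ∅ := by
  rw [eq_empty_iff_forall_notMem]
  rintro q ⟨hqF, a, ha⟩
  obtain ⟨⟨h, hh, e0⟩, ⟨h', hh', e1⟩⟩ := hqF
  -- choose a coordinate i with |x i| = 1 and q i ≠ 0
  have both : |x 0| = 1 → |x 1| = 1 → q 0 = 0 → q 1 ≠ 0 := by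
    intro hx0 hx1 hq0 hq1
    have hhI : h ∈ Icc (-1:ℝ) 1 := by
      have e : exH (x 1) = Icc (-1:ℝ) 1 := if_pos hx1
      rwa [e] at hh
    have hhI' : h' ∈ Icc (-1:ℝ) 1 := by
      have e : exH (x 0) = Icc (-1:ℝ) 1 := if_pos hx0
      rwa [e] at hh'
    have E0 : -x 0 + x 1 + h = 0 := by rw [← hq0, e0]
    have E1 : -x 0 - x 1 + h' = 0 := by rw [← hq1, e1]
    obtain ⟨b1, b2⟩ := hhI
    obtain ⟨b3, b4⟩ := hhI'
    rcases abs_one_cases hx0 with h0' | h0' <;> rcases abs_one_cases hx1 with h1' | h1' <;>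
      rw [h0', h1'] at E0 E1 <;> linarith
  have hchoice : (|x 0| = 1 ∧ q 0 ≠ 0) ∨ (|x 1| = 1 ∧ q 1 ≠ 0) := by
    rcases hx with hx0 | hx1
    · by_cases hx1 : |x 1| = 1
      · by_cases hq0 : q 0 = 0
        · exact Or.inr ⟨hx1, both hx0 hx1 hq0⟩
        · exact Or.inl ⟨hx0, hq0⟩
      · left
        refine ⟨hx0, ?_⟩
        have hh0 : h = 0 := by
          have : exH (x 1) = {0} := if_neg hx1
          rwa [this, mem_singleton_iff] at hh
        rw [e0, hh0, add_zero]
        intro hc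
        have : x 1 = x 0 := by linarith
        rw [this] at hx1; exact hx1 hx0
    · by_cases hx0 : |x 0| = 1
      · by_cases hq0 : q 0 = 0
        · exact Or.inr ⟨hx1, both hx0 hx1 hq0⟩
        · exact Or.inl ⟨hx0, hq0⟩
      · right
        refine ⟨hx1, ?_⟩
        have hh0 : h' = 0 := by
          have : exH (x 0) = {0} := if_neg hx0
          rwa [this, mem_singleton_iff] at hh'
        rw [e1, hh0, add_zero]
        intro hc
        have : x 0 = -x 1 := by linarith
        rw [this, abs_neg] at hx0; exact hx0 hx1
  -- common contradiction
  have hp1 : eP (csel (x 0)) (csel (x 1)) ∈ cGrad exU x :=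
    subgrad_vec (csel_subgrad _) (csel_subgrad _)
  rcases hchoice with ⟨hxi, hqi⟩ | ⟨hxi, hqi⟩
  · have hp2 : eP (x 0) (csel (x 1)) ∈ cGrad exU x :=
      subgrad_vec (sgn_subgrad (abs_one_cases hxi)) (csel_subgrad _)
    have e1' := ha _ hp1
    have e2' := ha _ hp2
    rw [inner_E2] at e1' e2'
    simp only [eP_zero, eP_one, csel_of_abs_one hxi] at e1' e2'
    have : x 0 * q 0 = 0 := by linarith
    rcases mul_eq_zero.mp this with hc | hc
    · rcases abs_one_cases hxi with h | h <;> rw [h] at hc <;> norm_num at hc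
    · exact hqi hc
  · have hp2 : eP (csel (x 0)) (x 1) ∈ cGrad exU x :=
      subgrad_vec (csel_subgrad _) (sgn_subgrad (abs_one_cases hxi))
    have e1' := ha _ hp1
    have e2' := ha _ hp2
    rw [inner_E2] at e1' e2'
    simp only [eP_zero, eP_one, csel_of_abs_one hxi] at e1' e2'
    have : x 1 * q 1 = 0 := by linarith
    rcases mul_eq_zero.mp this with hc | hc
    · rcases abs_one_cases hxi with h | h <;> rw [h] at hc <;> norm_num at hc
    · exact hqi hc

def exA (w : E2) : E2 := eP (-w 0 + w 1) (-w 0 - w 1)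

lemma zero_mem_exH (y : ℝ) : (0:ℝ) ∈ exH y := by
  unfold exH; split_ifs
  · exact ⟨by norm_num, by norm_num⟩
  · rfl

lemma exA_mem (w : E2) : exA w ∈ exF w :=
  ⟨⟨0, zero_mem_exH _, by simp [exA]⟩, ⟨0, zero_mem_exH _, by simp [exA]⟩⟩

lemma countable_isol {T : Set ℝ} (h : ∀ t ∈ T, ∃ ε > 0, ∀ s ∈ T, dist s t < ε → s = t) :
    T.Countable := by
  have hd : DiscreteTopology ↥T := by
    rw [discreteTopology_subtype_iff]
    intro t ht
    obtain ⟨ε, hε, hiso⟩ := h t ht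
    have hempty : (ball t ε ∩ {t}ᶜ) ∩ T = ∅ := by
      ext s
      simp only [mem_inter_iff, mem_ball, mem_compl_iff, mem_singleton_iff, mem_empty_iff_false,
        iff_false, not_and, and_imp]
      intro hb hne hT
      exact hne (hiso s hT hb)
    rw [← empty_mem_iff_bot, ← hempty]
    exact inter_mem_inf
      (inter_mem (mem_nhdsWithin_of_mem_nhds (ball_mem_nhds _ hε)) self_mem_nhdsWithin)
      (mem_principal_self T)
  exact (HereditarilyLindelof_LindelofSets T).countable hd

lemma deriv_coord {x : ℝ → E2} {v : E2} {t : ℝ} (hx : HasDerivAt x v t) (i : Fin 2) :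
    HasDerivAt (fun s => x s i) (v i) t := by
  have := (EuclideanSpace.proj (𝕜 := ℝ) i).hasFDerivAt.comp_hasDerivAt t hx
  exact this

lemma countable_T (x x' : ℝ → E2) (i : Fin 2) (σ : ℝ) :
    Set.Countable {t | x t i = σ ∧ HasDerivAt x (x' t) t ∧ x' t i ≠ 0} := by
  apply countable_isol
  rintro t ⟨h1, h2, h3⟩
  have hc := deriv_coord h2 i
  have hslope := hasDerivAt_iff_tendsto_slope.mp hc
  have hne : ∀ᶠ s in 𝓝[≠] t, slope (fun s => x s i) t s ≠ 0 := hslope.eventually_ne h3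
  obtain ⟨ε, hε, hball⟩ := nhdsWithin_basis_ball.eventually_iff.mp hne
  refine ⟨ε, hε, fun s hs hd => ?_⟩
  by_contra hst
  have hsl := hball ⟨mem_ball.mpr hd, hst⟩
  apply hsl
  have : x s i = x t i := by rw [hs.1, h1]
  rw [slope_def_field, this, sub_self, div_eq_zero_iff]
  left; rfl
  
lemma sol_ae {x x' : ℝ → E2} {I : Set ℝ} (hsol : IsSolOn (auton exF) x x' I) :
    ∀ᵐ t, t ∈ I → HasDerivAt x (x' t) t ∧ x' t = exA (x t) := by
  have h2 := hsol.2.1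
  have hT : ∀ (i : Fin 2) (σ : ℝ),
      (volume {t | x t i = σ ∧ HasDerivAt x (x' t) t ∧ x' t i ≠ 0} : ENNReal) = 0 :=
    fun i σ => (countable_T x x' i σ).measure_zero _
  have m00 := measure_eq_zero_iff_ae_notMem.mp (hT 0 1)
  have m01 := measure_eq_zero_iff_ae_notMem.mp (hT 0 (-1))
  have m10 := measure_eq_zero_iff_ae_notMem.mp (hT 1 1)
  have m11 := measure_eq_zero_iff_ae_notMem.mp (hT 1 (-1))
  filter_upwards [h2, m00, m01, m10, m11] with t ht h00 h01 h10 h11 htI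
  obtain ⟨hder, hmem⟩ := ht htI
  refine ⟨hder, ?_⟩
  obtain ⟨⟨h, hh, e0⟩, ⟨h', hh', e1⟩⟩ := hmem
  have key0 : |x t 0| = 1 → x' t 0 = 0 := by
    intro habs
    by_contra hne
    rcases abs_one_cases habs with hc | hc
    · exact h00 ⟨hc, hder, hne⟩
    · exact h01 ⟨hc, hder, hne⟩
  have key1 : |x t 1| = 1 → x' t 1 = 0 := by
    intro habs
    by_contra hne
    rcases abs_one_cases habs with hc | hc
    · exact h10 ⟨hc, hder, hne⟩
    · exact h11 ⟨hc, hder, hne⟩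
  have hA : ¬ |x t 0| = 1 := by
    intro hA
    have q0 : x' t 0 = 0 := key0 hA
    by_cases hB : |x t 1| = 1
    · have q1 : x' t 1 = 0 := key1 hB
      have hhI : h ∈ Icc (-1:ℝ) 1 := by
        have e : exH (x t 1) = Icc (-1:ℝ) 1 := if_pos hB
        rwa [e] at hh
      have hhI' : h' ∈ Icc (-1:ℝ) 1 := by
        have e : exH (x t 0) = Icc (-1:ℝ) 1 := if_pos hA
        rwa [e] at hh'
      have E0 : -x t 0 + x t 1 + h = 0 := by rw [← e0]; exact q0
      have E1 : -x t 0 - x t 1 + h' = 0 := by rw [← e1]; exact q1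
      obtain ⟨b1, b2⟩ := hhI
      obtain ⟨b3, b4⟩ := hhI'
      rcases abs_one_cases hA with h0' | h0' <;> rcases abs_one_cases hB with h1' | h1' <;>
        rw [h0', h1'] at E0 E1 <;> linarith
    · have hh0 : h = 0 := by
        have e : exH (x t 1) = {0} := if_neg hB
        rwa [e, mem_singleton_iff] at hh
      have : x t 1 = x t 0 := by rw [hh0] at e0; rw [e0] at q0; linarith
      rw [this] at hB; exact hB hA
  have hB : ¬ |x t 1| = 1 := by
    intro hB
    have q1 : x' t 1 = 0 := key1 hB
    have hh0 : h' = 0 := by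
      have e : exH (x t 0) = {0} := by
        unfold exH; rw [if_neg hA]
      rwa [e, mem_singleton_iff] at hh'
    have : x t 0 = -x t 1 := by rw [hh0] at e1; rw [e1] at q1; linarith
    rw [this, abs_neg] at hA; exact hA hB
  have hh0 : h = 0 := by
    have e : exH (x t 1) = {0} := if_neg hB
    rwa [e, mem_singleton_iff] at hh
  have hh0' : h' = 0 := by
    have e : exH (x t 0) = {0} := if_neg hA
    rwa [e, mem_singleton_iff] at hh'
  ext i
  fin_cases i
  · show x' t 0 = exA (x t) 0
    simp [exA, e0, hh0]
  · show x' t 1 = exA (x t) 1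
    simp [exA, e1, hh0']

lemma inner_exA (w : E2) : (inner ℝ (exA w) w : ℝ) = -‖w‖^2 := by
  have hn : ‖w‖^2 = w 0 * w 0 + w 1 * w 1 := by
    rw [← real_inner_self_eq_norm_sq, inner_E2]
  rw [inner_E2, hn]
  simp [exA]; ring

lemma part3 {x x' : ℝ → E2} {I : Set ℝ} (hsol : IsSolOn (auton exF) x x' I) :
    ∀ᵐ t, t ∈ I → (inner ℝ (x' t) (x t) : ℝ) = -‖x t‖^2 := by
  filter_upwards [sol_ae hsol] with t ht htI
  obtain ⟨_, he⟩ := ht htI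
  rw [he, inner_exA]


lemma norm_E2 (w : E2) : ‖w‖ = Real.sqrt (w 0 ^2 + w 1 ^2) := by
  rw [EuclideanSpace.norm_eq]
  simp [Fin.sum_univ_two, sq_abs]

lemma exA_lips : LipschitzWith 2 exA := by
  rw [lipschitzWith_iff_dist_le_mul]
  intro u v
  rw [dist_eq_norm, dist_eq_norm]
  have h1 : exA u - exA v = exA (u - v) := by
    ext i; fin_cases i <;>
      simp only [exA, PiLp.sub_apply] <;> simp <;> ring
  rw [h1]
  have key : ∀ w : E2, ‖exA w‖ ≤ 2 * ‖w‖ := by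
    intro w
    rw [norm_E2, norm_E2 w]
    have e : exA w 0 ^2 + exA w 1 ^2 = (-w 0 + w 1)^2 + (-w 0 - w 1)^2 := by simp [exA]
    rw [e]
    calc Real.sqrt ((-w 0 + w 1)^2 + (-w 0 - w 1)^2) ≤ Real.sqrt (2^2 * (w 0^2 + w 1^2)) :=
          Real.sqrt_le_sqrt (by nlinarith [sq_nonneg (w 0 - w 1), sq_nonneg (w 0 + w 1)])
    _ = 2 * Real.sqrt (w 0^2 + w 1^2) := by
          rw [Real.sqrt_mul (by positivity), Real.sqrt_sq (by norm_num)]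
  have := key (u - v)
  push_cast
  linarith

def exSol (z : E2) (t : ℝ) : E2 :=
  eP (Real.exp (-t) * (z 0 * Real.cos t + z 1 * Real.sin t))
     (Real.exp (-t) * (z 1 * Real.cos t - z 0 * Real.sin t))

lemma exSol_zero (z : E2) : exSol z 0 = z := by
  ext i
  fin_cases i
  · show exSol z 0 0 = z 0
    simp only [exSol, eP_zero]
    norm_num
  · show exSol z 0 1 = z 1
    simp only [exSol, eP_one]
    norm_num

lemma hasDerivAt_eP2 {f g : ℝ → ℝ} {f' g' : ℝ} {t : ℝ}
    (hf : HasDerivAt f f' t) (hg : HasDerivAt g g' t) :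
    HasDerivAt (fun s => eP (f s) (g s)) (eP f' g') t := by
  have key : ∀ (a b : ℝ), eP a b = a • eP 1 0 + b • eP 0 1 := by
    intro a b; ext i
    fin_cases i
    · show eP a b 0 = a * eP 1 0 0 + b * eP 0 1 0
      rw [eP_zero, eP_zero, eP_zero]; ring
    · show eP a b 1 = a * eP 1 0 1 + b * eP 0 1 1
      rw [eP_one, eP_one, eP_one]; ring
  have h2 : HasDerivAt (fun s => f s • eP 1 0 + g s • eP 0 1) (f' • eP 1 0 + g' • eP 0 1) t :=
    (hf.smul_const _).add (hg.smul_const _)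
  have e1 : (fun s => f s • eP 1 0 + g s • eP 0 1) = fun s => eP (f s) (g s) :=
    funext fun s => (key (f s) (g s)).symm
  rw [key f' g']
  exact e1 ▸ h2

lemma exSol_deriv (z : E2) (t : ℝ) : HasDerivAt (exSol z) (exA (exSol z t)) t := by
  have h1 : HasDerivAt (fun s : ℝ => -s) (-1) t := (hasDerivAt_id t).neg
  have hexp : HasDerivAt (fun s : ℝ => Real.exp (-s)) (Real.exp (-t) * -1) t :=
    (Real.hasDerivAt_exp (-t)).comp t h1
  have hg0 : HasDerivAt (fun s => z 0 * Real.cos s + z 1 * Real.sin s)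
      (z 0 * -Real.sin t + z 1 * Real.cos t) t :=
    ((Real.hasDerivAt_cos t).const_mul (z 0)).add ((Real.hasDerivAt_sin t).const_mul (z 1))
  have hg1 : HasDerivAt (fun s => z 1 * Real.cos s - z 0 * Real.sin s)
      (z 1 * -Real.sin t - z 0 * Real.cos t) t :=
    ((Real.hasDerivAt_cos t).const_mul (z 1)).sub ((Real.hasDerivAt_sin t).const_mul (z 0))
  have h0 := hexp.mul hg0
  have h1' := hexp.mul hg1
  have hcomb := hasDerivAt_eP2 h0 h1'
  have heq : exA (exSol z t) =
      eP (Real.exp (-t) * -1 * (z 0 * Real.cos t + z 1 * Real.sin t) +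
          Real.exp (-t) * (z 0 * -Real.sin t + z 1 * Real.cos t))
         (Real.exp (-t) * -1 * (z 1 * Real.cos t - z 0 * Real.sin t) +
          Real.exp (-t) * (z 1 * -Real.sin t - z 0 * Real.cos t)) := by
    ext i; fin_cases i <;> simp [exA, exSol] <;> ring
  rw [heq]
  exact hcomb

lemma exSol_cont (z : E2) : Continuous (exSol z) :=
  continuous_iff_continuousAt.mpr fun τ => (exSol_deriv z τ).continuousAt

lemma exSol_norm (z : E2) (t : ℝ) : ‖exSol z t‖ = Real.exp (-t) * ‖z‖ := by
  rw [norm_E2, norm_E2]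
  have hsc := Real.sin_sq_add_cos_sq t
  have e : exSol z t 0 ^2 + exSol z t 1 ^2 = (Real.exp (-t))^2 * (z 0^2 + z 1^2) := by
    simp only [exSol, eP_zero, eP_one]
    nlinarith [hsc]
  rw [e, Real.sqrt_mul (sq_nonneg _), Real.sqrt_sq (Real.exp_pos _).le]

lemma Icc_sub {I : Set ℝ} (hI : IntervalFrom I 0) {b : ℝ} (hb : b ∈ I) : Icc 0 b ⊆ I := by
  rcases hI with rfl | ⟨T, hT, rfl⟩
  · exact fun t ht => ht.1
  · exact fun t ht => ⟨ht.1, lt_of_le_of_lt ht.2 hb.2⟩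

lemma zero_mem_I {I : Set ℝ} (hI : IntervalFrom I 0) : (0:ℝ) ∈ I := by
  rcases hI with rfl | ⟨T, hT, rfl⟩
  · exact mem_Ici.mpr (le_refl 0)
  · exact ⟨le_refl 0, hT⟩

lemma nonneg_of_mem {I : Set ℝ} (hI : IntervalFrom I 0) {t : ℝ} (ht : t ∈ I) : 0 ≤ t := by
  rcases hI with rfl | ⟨T, hT, rfl⟩
  · exact ht
  · exact ht.1

lemma sol_eq {x x' : ℝ → E2} {I : Set ℝ} (hI : IntervalFrom I 0)
    (hsol : IsSolOn (auton exF) x x' I) : ∀ t ∈ I, x t = exSol (x 0) t := by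
  intro b hb
  have h0I : (0:ℝ) ∈ I := zero_mem_I hI
  have hbnn : 0 ≤ b := nonneg_of_mem hI hb
  set g : ℝ → E2 := fun s => exA (x s) with hgdef
  have hgc : ContinuousOn g I := exA_lips.continuous.comp_continuousOn hsol.1
  have hae := sol_ae hsol
  have hxint : ∀ τ ∈ I, x τ = x 0 + ∫ s in (0:ℝ)..τ, g s := by
    intro τ hτ
    have hτnn : 0 ≤ τ := nonneg_of_mem hI hτ
    have hint := hsol.2.2 0 h0I τ hτ
    have heq : ∫ s in (0:ℝ)..τ, x' s = ∫ s in (0:ℝ)..τ, g s := by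
      apply intervalIntegral.integral_congr_ae
      filter_upwards [hae] with s hs hsΙ
      have hsI : s ∈ I := by
        have hsub : Set.uIoc (0:ℝ) τ ⊆ I := by
          rw [uIoc_of_le hτnn]
          exact fun u hu => Icc_sub hI hτ ⟨hu.1.le, hu.2⟩
        exact hsub hsΙ
      exact (hs hsI).2
    have h2 := hint.2
    rw [heq] at h2
    rw [← h2]; ring_nf; abel
  -- neighborhood facts
  obtain ⟨U, hUopen, hUsub⟩ :
      ∃ U : Set ℝ, IsOpen U ∧ ∀ τ ∈ Ico 0 b, τ ∈ U ∧ Ici τ ∩ U ⊆ I ∧ Ioi τ ∩ U ⊆ I := by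
    rcases hI with rfl | ⟨T, hT, rfl⟩
    · refine ⟨univ, isOpen_univ, fun τ hτ => ⟨trivial, ?_, ?_⟩⟩
      · exact fun u hu => hτ.1.trans hu.1
      · exact fun u hu => hτ.1.trans hu.1.le
    · refine ⟨Iio T, isOpen_Iio, fun τ hτ => ⟨?_, ?_, ?_⟩⟩
      · exact lt_trans hτ.2 hb.2
      · exact fun u hu => ⟨hτ.1.trans hu.1, hu.2⟩
      · exact fun u hu => ⟨hτ.1.trans hu.1.le, hu.2⟩
  have hder : ∀ τ ∈ Ico 0 b, HasDerivWithinAt x (exA (x τ)) (Ici τ) τ := by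
    intro τ hτ
    have hτI : τ ∈ I := Icc_sub hI hb ⟨hτ.1, hτ.2.le⟩
    obtain ⟨hτU, hsub1, hsub2⟩ := hUsub τ hτ
    have hUnhds : U ∈ 𝓝 τ := hUopen.mem_nhds hτU
    have hInt : IntervalIntegrable g volume 0 τ := by
      apply ContinuousOn.intervalIntegrable
      rw [uIcc_of_le hτ.1]
      exact hgc.mono (Icc_sub hI hτI)
    have hmemI : I ∈ 𝓝[Ioi τ] τ :=
      mem_of_superset (inter_mem self_mem_nhdsWithin (mem_nhdsWithin_of_mem_nhds hUnhds)) hsub2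
    have hmeas : StronglyMeasurableAtFilter g (𝓝[Ioi τ] τ) volume :=
      ⟨Ioi τ ∩ U, inter_mem self_mem_nhdsWithin (mem_nhdsWithin_of_mem_nhds hUnhds),
        (hgc.mono hsub2).aestronglyMeasurable (isOpen_Ioi.inter hUopen).measurableSet⟩
    have hcont : ContinuousWithinAt g (Ioi τ) τ := (hgc τ hτI).mono_of_mem_nhdsWithin hmemI
    have hG : HasDerivWithinAt (fun u => ∫ s in (0:ℝ)..u, g s) (g τ) (Ici τ) τ :=
      intervalIntegral.integral_hasDerivWithinAt_right hInt hmeas hcont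
    have hG2 : HasDerivWithinAt (fun u => x 0 + ∫ s in (0:ℝ)..u, g s) (g τ) (Ici τ) τ :=
      hG.const_add _
    have hG3 : HasDerivWithinAt (fun u => x 0 + ∫ s in (0:ℝ)..u, g s) (g τ) (Ici τ ∩ U) τ :=
      hG2.mono inter_subset_left
    have hcongr : HasDerivWithinAt x (g τ) (Ici τ ∩ U) τ :=
      hG3.congr (fun s hs => hxint s (hsub1 hs)) (hxint τ hτI)
    exact (hasDerivWithinAt_inter hUnhds).mp hcongr
  have hyder : ∀ τ ∈ Ico 0 b, HasDerivWithinAt (exSol (x 0)) (exA (exSol (x 0) τ)) (Ici τ) τ :=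
    fun τ _ => (exSol_deriv _ τ).hasDerivWithinAt
  have hxc : ContinuousOn x (Icc 0 b) := hsol.1.mono (Icc_sub hI hb)
  have hyc : ContinuousOn (exSol (x 0)) (Icc 0 b) := (exSol_cont _).continuousOn
  have huniq := ODE_solution_unique (v := fun _ w => exA w) (K := 2) (fun _ => exA_lips)
    hxc hder hyc hyder (exSol_zero _).symm
  exact huniq ⟨hbnn, le_refl b⟩

lemma solOn_exSol (z : E2) :
    IsSolOn (auton exF) (exSol z) (fun t => exA (exSol z t)) (Ici 0) := by
  have hcont : Continuous fun τ => exA (exSol z τ) := exA_lips.continuous.comp (exSol_cont z)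
  refine ⟨(exSol_cont z).continuousOn, ?_, ?_⟩
  · exact Filter.Eventually.of_forall fun t _ => ⟨exSol_deriv z t, exA_mem _⟩
  · intro s _ t _
    refine ⟨hcont.intervalIntegrable _ _, ?_⟩
    rw [intervalIntegral.integral_eq_sub_of_hasDerivAt (fun τ _ => exSol_deriv z τ)
      (hcont.intervalIntegrable _ _)]

lemma maxSol_eq {x x' : ℝ → E2} {I : Set ℝ} (h : IsMaxSol (auton exF) x x' 0 I) :
    I = Ici 0 ∧ ∀ t ∈ I, x t = exSol (x 0) t := by
  obtain ⟨hIF, hsol, hmax⟩ := h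
  have hIeq := sol_eq hIF hsol
  refine ⟨?_, hIeq⟩
  rcases hIF with hIci | ⟨T, hT, hIco⟩
  · exact hIci
  · exfalso
    have hJ := hmax (exSol (x 0)) (fun t => exA (exSol (x 0) t)) (Ici 0) (Or.inl rfl)
      (solOn_exSol _) (by rw [hIco]; exact fun t ht => ht.1)
      (fun t ht => (hIeq t ht).symm)
    have hTmem : T ∈ I := by rw [← hJ]; exact mem_Ici.mpr hT.le
    rw [hIco] at hTmem
    exact lt_irrefl T hTmem.2

/-- Example 2: the reduction `G_{exU}^{exF}` equals `exF(x)` off the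
lines `|xᵢ| = 1` and is empty on them; consequently every solution satisfies
`⟪ẋ(t), x(t)⟫ = −‖x(t)‖²` a.e., and `ẋ ∈ exF(x)` is globally asymptotically stable at
`x = 0`. -/
theorem stmt18 :
    (∀ x : EuclideanSpace ℝ (Fin 2), |x 0| ≠ 1 → |x 1| ≠ 1 → GRedA exU exF x = exF x) ∧
    (∀ x : EuclideanSpace ℝ (Fin 2), (|x 0| = 1 ∨ |x 1| = 1) → GRedA exU exF x = ∅) ∧
    (∀ x x' : ℝ → EuclideanSpace ℝ (Fin 2), ∀ I : Set ℝ, IsSolOn (auton exF) x x' I →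
      ∀ᵐ t, t ∈ I → (inner ℝ (x' t) (x t) : ℝ) = -‖x t‖ ^ 2) ∧
    ((∀ ε > 0, ∃ δ > 0, ∀ x x' I, IsMaxSol (auton exF) x x' 0 I →
        x 0 ∈ closedBall (0 : EuclideanSpace ℝ (Fin 2)) δ →
        I = Ici (0 : ℝ) ∧ ∀ t ∈ I, x t ∈ closedBall (0 : EuclideanSpace ℝ (Fin 2)) ε) ∧
      ∀ x x' I, IsMaxSol (auton exF) x x' 0 I →
        I = Ici (0 : ℝ) ∧ Tendsto x atTop (𝓝 (0 : EuclideanSpace ℝ (Fin 2)))) := by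
  refine ⟨fun x h0 h1 => part1 h0 h1, fun x hx => part2 hx,
    fun x x' I hsol => part3 hsol, ?_, ?_⟩
  · intro ε hε
    refine ⟨ε, hε, fun x x' I hmax hball => ?_⟩
    obtain ⟨hIci, heq⟩ := maxSol_eq hmax
    refine ⟨hIci, fun t ht => ?_⟩
    rw [mem_closedBall_zero_iff] at hball ⊢
    rw [heq t ht, exSol_norm]
    have ht0 : 0 ≤ t := nonneg_of_mem hmax.1 ht
    have hexp : Real.exp (-t) ≤ 1 := Real.exp_le_one_iff.mpr (by linarith)
    calc Real.exp (-t) * ‖x 0‖ ≤ 1 * ‖x 0‖ := by nlinarith [norm_nonneg (x 0)]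
    _ ≤ ε := by rw [one_mul]; exact hball
  · intro x x' I hmax
    obtain ⟨hIci, heq⟩ := maxSol_eq hmax
    refine ⟨hIci, ?_⟩
    rw [tendsto_zero_iff_norm_tendsto_zero]
    apply squeeze_zero' (Filter.Eventually.of_forall fun t => norm_nonneg _)
    · filter_upwards [eventually_ge_atTop (0:ℝ)] with t ht
      rw [heq t (by rw [hIci]; exact mem_Ici.mpr ht), exSol_norm]
    · simpa using Real.tendsto_exp_neg_atTop_nhds_zero.mul_const ‖x 0‖
end
end
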